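/- Let (k_i)_{i∈I} and (ℓ_i)_{i∈I} be vectors of natural numbers with k_i ≥ ℓ_i > 1 for every student i. For every problem (P,≻,q), the matching GS(P^ℓ̄, ≻, q), where each student i reports the truncation P_i^{ℓ_i}, has at least as many blocking students under (P,≻,q) as the matching GS(P^k̄, ≻, q), where each student i reports the truncation P_i^{k_i}. -/

import Mathlib

/-!
School choice framework following Bonkoungou–Nesterov,
"Reforms meet fairness concerns in school and college admissions".

Students `I` and schools `S` are finite types with `|I| > |S|`.
A strict preference relation of a student over `S ∪ {∅}` is represented by a list
of `Option S` containing every element exactly once (earlier = more preferred);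
`none` is the outside option.  A strict priority order of a school is a list of
`I` containing every student exactly once (earlier = higher priority).
-/

namespace SchoolChoice

variable {I S : Type*} [Fintype I] [DecidableEq I] [Fintype S] [DecidableEq S]

/-- `p` is a strict preference relation on `S ∪ {∅}`: a ranking list containing every
element of `Option S` exactly once. -/
def ValidPref (p : List (Option S)) : Prop := p.Nodup ∧ ∀ x : Option S, x ∈ p

/-- `pr` is a strict priority order: a ranking list containing every student exactly once. -/
def ValidPrio (pr : List I) : Prop := pr.Nodup ∧ ∀ i : I, i ∈ pr

/-- `a` is strictly preferred to `b` under the preference relation `p`. -/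
def prefLt (p : List (Option S)) (a b : Option S) : Prop := p.idxOf a < p.idxOf b

/-- `i` has strictly higher priority than `j` under the priority order `pr`. -/
def prioLt (pr : List I) (i j : I) : Prop := pr.idxOf i < pr.idxOf j

instance (p : List (Option S)) (a b : Option S) : Decidable (prefLt p a b) :=
  inferInstanceAs (Decidable (_ < _))

instance (pr : List I) (i j : I) : Decidable (prioLt pr i j) :=
  inferInstanceAs (Decidable (_ < _))

/-- The acceptable schools of `p` (those preferred to the outside option), in preference
order. -/
def acceptables (p : List (Option S)) : List S := (p.takeWhile Option.isSome).filterMap id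

/-- The truncation of `p` after its `k`-th acceptable school: the preference relation
listing, in the same order, only the `min k _` most-preferred acceptable schools of `p`,
all other schools being unacceptable (kept below `none` in their original order). -/
def truncate (p : List (Option S)) (k : ℕ) : List (Option S) :=
  ((acceptables p).take k).map some ++
    none :: p.filter (fun x => decide (x ≠ none ∧ x ∉ ((acceptables p).take k).map some))

/-- `μ` is a matching: it respects the capacities `q`. -/
def IsMatching (q : S → ℕ) (μ : I → Option S) : Prop :=
  ∀ s : S, (Finset.univ.filter (fun i => μ i = some s)).card ≤ q s

/-- The pair `(i, s)` blocks `μ` under the problem `(P, prio, q)`. -/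
def Blocks (P : I → List (Option S)) (prio : S → List I) (q : S → ℕ)
    (μ : I → Option S) (i : I) (s : S) : Prop :=
  prefLt (P i) (some s) (μ i) ∧
    ((Finset.univ.filter (fun j => μ j = some s)).card < q s ∨
      ∃ j : I, μ j = some s ∧ prioLt (prio s) i j)

/-- `i` is a blocking student for `μ` under `(P, prio, q)`. -/
def BlockingStudent (P : I → List (Option S)) (prio : S → List I) (q : S → ℕ)
    (μ : I → Option S) (i : I) : Prop :=
  ∃ s : S, Blocks P prio q μ i s

/-- `μ` is individually rational under `P`. -/
def IndividuallyRational (P : I → List (Option S)) (μ : I → Option S) : Prop :=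
  ∀ i : I, ¬ prefLt (P i) none (μ i)

/-- `μ` is stable at `(P, prio, q)`. -/
def IsStable (P : I → List (Option S)) (prio : S → List I) (q : S → ℕ)
    (μ : I → Option S) : Prop :=
  IndividuallyRational P μ ∧ ∀ i : I, ¬ BlockingStudent P prio q μ i

/-- The number of blocking students for `μ` under `(P, prio, q)`. -/
noncomputable def numBlocking (P : I → List (Option S)) (prio : S → List I) (q : S → ℕ)
    (μ : I → Option S) : ℕ :=
  {i : I | BlockingStudent P prio q μ i}.ncard

/-! ### The Gale–Shapley student-proposing deferred acceptance mechanism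

The state `σ : I → ℕ` records, for each student, how many of her acceptable schools
have already rejected her; she currently applies to the `σ i`-th school on her list
(if any).  At each round every school tentatively keeps the `q s` highest-priority
students among its current applicants and rejects the rest, who move on. -/

/-- The school student `i` currently applies to. -/
def daTarget (P : I → List (Option S)) (σ : I → ℕ) (i : I) : Option S :=
  (acceptables (P i))[σ i]?

/-- The students tentatively held by school `s`: the `q s` highest-priority current
applicants. -/
def daHeld (P : I → List (Option S)) (prio : S → List I) (q : S → ℕ)
    (σ : I → ℕ) (s : S) : List I :=
  ((prio s).filter (fun i => decide (daTarget P σ i = some s))).take (q s)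

/-- One round of deferred acceptance: every rejected student moves to her next choice. -/
def daStep (P : I → List (Option S)) (prio : S → List I) (q : S → ℕ)
    (σ : I → ℕ) : I → ℕ := fun i =>
  match daTarget P σ i with
  | none => σ i
  | some s => if i ∈ daHeld P prio q σ s then σ i else σ i + 1

/-- The Gale–Shapley (student-proposing deferred acceptance) mechanism.  Iterating the
round map `|I| * |S| + 1` times is guaranteed to reach the terminal state. -/
def GS (P : I → List (Option S)) (prio : S → List I) (q : S → ℕ) : I → Option S :=
  fun i =>
    let σ := (daStep P prio q)^[Fintype.card I * Fintype.card S + 1] (fun _ => 0)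
    match daTarget P σ i with
    | none => none
    | some s => if i ∈ daHeld P prio q σ s then some s else none

/-- The constrained Gale–Shapley mechanism `GS^k`. -/
def GSk (k : ℕ) (P : I → List (Option S)) (prio : S → List I) (q : S → ℕ) : I → Option S :=
  GS (fun i => truncate (P i) k) prio q

/-! ### The Boston (immediate acceptance) mechanism -/

/-- Round `t` of the Boston mechanism: each not-yet-accepted student applies to her
`t`-th ranked acceptable school (0-indexed), and each school permanently accepts, up to
its remaining capacity, its highest-priority new applicants. -/
def bostonRound (P : I → List (Option S)) (prio : S → List I) (q : S → ℕ)
    (μ : I → Option S) (t : ℕ) : I → Option S := fun i =>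
  match μ i with
  | some s => some s
  | none =>
    match (acceptables (P i))[t]? with
    | none => none
    | some s =>
      if i ∈ ((prio s).filter
            (fun j => decide (μ j = none ∧ (acceptables (P j))[t]? = some s))).take
          (q s - (Finset.univ.filter (fun j => μ j = some s)).card)
      then some s else none

/-- The Boston (immediate acceptance) mechanism. -/
def Boston (P : I → List (Option S)) (prio : S → List I) (q : S → ℕ) : I → Option S :=
  (List.range (Fintype.card S)).foldl (bostonRound P prio q) (fun _ => none)

/-- The constrained Boston mechanism `β^k`. -/
def Bostonk (k : ℕ) (P : I → List (Option S)) (prio : S → List I) (q : S → ℕ) :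
    I → Option S :=
  Boston (fun i => truncate (P i) k) prio q

/-! ### The first-preference-first mechanism -/

/-- The adjusted priority profile: each first-preference-first school (member of `fpf`)
ranks students first by the rank they assign to it under `P` (counting the ranking of the
outside option as well), ties broken by the original priority; equal-preference schools
keep their original priority. -/
def fpfPrio (fpf : Finset S) (P : I → List (Option S)) (prio : S → List I) : S → List I :=
  fun s =>
    if s ∈ fpf then
      (List.range (Fintype.card S + 1)).flatMap
        (fun r => (prio s).filter (fun i => decide ((P i).idxOf (some s) = r)))
    else prio s

/-- The first-preference-first mechanism with set `fpf` of first-preference-first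
schools: Gale–Shapley run on the adjusted priorities. -/
def FPF (fpf : Finset S) (P : I → List (Option S)) (prio : S → List I) (q : S → ℕ) :
    I → Option S :=
  GS P (fpfPrio fpf P prio) q

/-- The constrained first-preference-first mechanism `FPF^k`. -/
def FPFk (fpf : Finset S) (k : ℕ) (P : I → List (Option S)) (prio : S → List I)
    (q : S → ℕ) : I → Option S :=
  FPF fpf (fun i => truncate (P i) k) prio q

/-! ### Manipulation and equilibrium notions -/

/-- Student `i` is a manipulating student of the mechanism `φ` (with priorities and
capacities fixed) at the true profile `P`. -/
def ManipulatingStudent (φ : (I → List (Option S)) → I → Option S)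
    (P : I → List (Option S)) (i : I) : Prop :=
  ∃ Q : List (Option S), ValidPref Q ∧
    prefLt (P i) (φ (Function.update P i Q) i) (φ P i)

/-- The mechanism `φ` is not manipulable at `P`. -/
def NotManipulable (φ : (I → List (Option S)) → I → Option S)
    (P : I → List (Option S)) : Prop :=
  ∀ i : I, ¬ ManipulatingStudent φ P i

/-- `P'` is a Nash equilibrium of the game `(φ, P)` in which the sophisticated students
are the members of `M` (who may misreport, and best respond) and all other (sincere)
students report truthfully. -/
def NashEq (φ : (I → List (Option S)) → I → Option S) (P : I → List (Option S))
    (M : Finset I) (P' : I → List (Option S)) : Prop :=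
  (∀ i, ValidPref (P' i)) ∧ (∀ i ∉ M, P' i = P i) ∧
    ∀ i ∈ M, ∀ Q : List (Option S), ValidPref Q →
      ¬ prefLt (P i) (φ (Function.update P' i Q) i) (φ P' i)

/-! ### Semi-sophisticated students -/

/-- Student `i` is guaranteed her first choice `s`: `s` is her most-preferred acceptable
school and `i` is among the `q s` highest-priority students at `s`. -/
def GuaranteedFirstChoice (P : I → List (Option S)) (prio : S → List I) (q : S → ℕ)
    (i : I) (s : S) : Prop :=
  (acceptables (P i)).head? = some s ∧ (prio s).idxOf i < q s

instance (P : I → List (Option S)) (prio : S → List I) (q : S → ℕ) (i : I) (s : S) :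
    Decidable (GuaranteedFirstChoice P prio q i s) :=
  inferInstanceAs (Decidable (_ ∧ _))

/-- School `s` is competitive: at least `q s` students are guaranteed their first
choice `s`. -/
def Competitive (P : I → List (Option S)) (prio : S → List I) (q : S → ℕ) (s : S) : Prop :=
  q s ≤ (Finset.univ.filter (fun i => GuaranteedFirstChoice P prio q i s)).card

instance (P : I → List (Option S)) (prio : S → List I) (q : S → ℕ) (s : S) :
    Decidable (Competitive P prio q s) :=
  inferInstanceAs (Decidable (_ ≤ _))

/-- `P'` is a Nash equilibrium of the game `(GS^ℓ, P)` with semi-sophisticated students: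
every student guaranteed her first choice reports truthfully; every other student reports
truthfully if she has at most `ℓ` acceptable schools or all her acceptable schools are
competitive, and otherwise lists as acceptable, in the order given by her true preference,
only her acceptable schools that are not competitive. -/
def SemiSophProfile (ℓ : ℕ) (P : I → List (Option S)) (prio : S → List I) (q : S → ℕ)
    (P' : I → List (Option S)) : Prop :=
  ∀ i : I,
    ((∃ s : S, GuaranteedFirstChoice P prio q i s) → P' i = P i) ∧
    (¬ (∃ s : S, GuaranteedFirstChoice P prio q i s) →
      (((acceptables (P i)).length ≤ ℓ ∨ ∀ s ∈ acceptables (P i), Competitive P prio q s) →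
          P' i = P i) ∧
      (¬ ((acceptables (P i)).length ≤ ℓ ∨
            ∀ s ∈ acceptables (P i), Competitive P prio q s) →
          acceptables (P' i) =
            (acceptables (P i)).filter (fun s => decide (¬ Competitive P prio q s))))


section AuxLists
set_option linter.unusedSectionVars false

variable {α : Type*}

theorem take_mono_mem {l : List α} {k : ℕ} {x : α} (h : x ∈ l.take k) : x ∈ l.take (k + 1) := by
  have hT : l.take k = (l.take (k + 1)).take k := by
    rw [List.take_take]
    congr 1
    omega
  rw [hT] at h
  exact List.take_subset _ _ h

theorem take_append_cons_of_le {X Y : List α} {i : α} {n : ℕ} (h : n ≤ X.length) :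
    (X ++ i :: Y).take n = (X ++ Y).take n := by
  rw [List.take_append, List.take_append,
    Nat.sub_eq_zero_of_le h]
  simp

theorem mem_take_append_cons {X Y : List α} {i x : α} {n : ℕ}
    (hx : x ∈ (X ++ i :: Y).take n) (hne : x ≠ i) : x ∈ (X ++ Y).take n := by
  rw [List.take_append] at hx ⊢
  rcases List.mem_append.1 hx with h | h
  · exact List.mem_append.2 (Or.inl h)
  · refine List.mem_append.2 (Or.inr ?_)
    rcases Nat.eq_zero_or_pos (n - X.length) with h0 | h0
    · rw [h0] at h; simp at h
    · obtain ⟨m, hm⟩ : ∃ m, n - X.length = m + 1 := ⟨n - X.length - 1, by omega⟩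
      rw [hm, List.take_succ_cons, List.mem_cons] at h
      rcases h with h | h
      · exact absurd h hne
      · rw [hm]; exact take_mono_mem h

theorem not_mem_take_append_cons {X Y : List α} {i x : α} {n : ℕ}
    (hi : i ∉ X ++ Y) (hx : x ∈ X ++ Y) (h : x ∉ (X ++ Y).take n) :
    x ∉ (X ++ i :: Y).take n :=
  fun hmem => h (mem_take_append_cons hmem (fun e => hi (e ▸ hx)))

theorem take_append_cons_of_not_mem_take {X Y : List α} {i : α} {n : ℕ}
    (h : i ∉ (X ++ i :: Y).take n) : (X ++ i :: Y).take n = (X ++ Y).take n := by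
  rcases le_or_gt n X.length with hn | hn
  · exact take_append_cons_of_le hn
  · exfalso
    apply h
    rw [List.take_append]
    refine List.mem_append.2 (Or.inr ?_)
    obtain ⟨m, hm⟩ : ∃ m, n - X.length = m + 1 := ⟨n - X.length - 1, by omega⟩
    rw [hm, List.take_succ_cons]
    exact List.mem_cons_self

theorem length_take_append_cons_le {X Y : List α} {i : α} {n : ℕ} :
    ((X ++ Y).take n).length ≤ ((X ++ i :: Y).take n).length := by
  simp only [List.length_take, List.length_append, List.length_cons]
  omega

theorem enter_take_append_cons {X Y : List α} {i : α} {n : ℕ} {R : α → α → Prop}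
    (hp : (X ++ i :: Y).Pairwise R) (hiX : i ∉ X) (hmem : i ∈ (X ++ i :: Y).take n) :
    ((X ++ Y).take n).length < n ∨ ∃ j ∈ (X ++ Y).take n, R i j := by
  have hXn : X.length < n := by
    by_contra hle
    push_neg at hle
    rw [List.take_append, Nat.sub_eq_zero_of_le hle] at hmem
    simp only [List.take_zero, List.append_nil] at hmem
    exact hiX (List.take_subset _ _ hmem)
  rcases Nat.lt_or_ge ((X ++ Y).take n).length n with h | h
  · exact Or.inl h
  · have hYlen : n - X.length ≤ Y.length := by
      simp only [List.length_take, List.length_append] at h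
      omega
    obtain ⟨y, hy⟩ : ∃ y, y ∈ Y.take (n - X.length) := by
      have h1 : 1 ≤ (Y.take (n - X.length)).length := by
        simp only [List.length_take]
        omega
      cases hT : Y.take (n - X.length) with
      | nil => rw [hT] at h1; simp at h1
      | cons a t => exact ⟨a, by simp [hT]⟩
    refine Or.inr ⟨y, ?_, ?_⟩
    · rw [List.take_append]
      exact List.mem_append.2 (Or.inr hy)
    · have h2 := (List.pairwise_append.1 hp).2.1
      exact (List.pairwise_cons.1 h2).1 y (List.take_subset _ _ hy)

theorem full_and_dominates_of_not_mem_take {L : List α} {n : ℕ} {x : α} {R : α → α → Prop}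
    (hp : L.Pairwise R) (hx : x ∈ L) (hnx : x ∉ L.take n) :
    (L.take n).length = n ∧ ∀ j ∈ L.take n, R j x := by
  have hlen : n ≤ L.length := by
    by_contra hc
    push_neg at hc
    rw [List.take_of_length_le (le_of_lt hc)] at hnx
    exact hnx hx
  refine ⟨by simp [List.length_take]; omega, ?_⟩
  intro j hj
  have hxd : x ∈ L.drop n := by
    have hx2 : x ∈ L.take n ++ L.drop n := by rw [List.take_append_drop]; exact hx
    rcases List.mem_append.1 hx2 with h | h
    · exact absurd h hnx
    · exact h
  have hp' : (L.take n ++ L.drop n).Pairwise R := by rw [List.take_append_drop]; exact hp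
  exact (List.pairwise_append.1 hp').2.2 j hj x hxd

section DecEq
set_option linter.unusedSectionVars false
variable [DecidableEq α]

theorem nodup_indexOf_getElem {l : List α} (h : l.Nodup) (i : ℕ) (hi : i < l.length) :
    l.idxOf l[i] = i := by
  have hm : l[i] ∈ l := List.getElem_mem _
  have h1 : l.idxOf l[i] < l.length := List.idxOf_lt_length_iff.2 hm
  have h2 : l[l.idxOf l[i]] = l[i] := List.getElem_idxOf h1
  exact (List.Nodup.getElem_inj_iff h).1 h2

theorem nodup_pairwise_indexOf {l : List α} (h : l.Nodup) :
    l.Pairwise fun a b => l.idxOf a < l.idxOf b := by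
  rw [List.pairwise_iff_getElem]
  intro i j hi hj hij
  rw [nodup_indexOf_getElem h i hi, nodup_indexOf_getElem h j hj]
  exact hij

theorem indexOf_take {l : List α} {k : ℕ} {x : α} (hx : x ∈ l.take k) :
    l.idxOf x = (l.take k).idxOf x := by
  conv_lhs => rw [← List.take_append_drop k l]
  rw [List.idxOf_append_of_mem hx]

theorem mem_take_of_indexOf_lt {l : List α} {k : ℕ} {x : α} (hx : x ∈ l) (h : l.idxOf x < k) :
    x ∈ l.take k := by
  have h1 : l.idxOf x < l.length := List.idxOf_lt_length_iff.2 hx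
  have h2 : (l.take k)[l.idxOf x]? = some x := by
    rw [List.getElem?_take_of_lt h, List.getElem?_eq_getElem h1, List.getElem_idxOf h1]
  exact List.mem_of_getElem? h2

theorem filter_insert_decomp {l : List α} (hl : l.Nodup) {p p' : α → Bool} {i : α}
    (hag : ∀ a, a ≠ i → p a = p' a) (hpi : p i = false) (hpi' : p' i = true) (hil : i ∈ l) :
    ∃ X Y, i ∉ X ∧ i ∉ Y ∧ l.filter p = X ++ Y ∧ l.filter p' = X ++ i :: Y := by
  obtain ⟨l₁, l₂, rfl⟩ := List.append_of_mem hil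
  have h1 : i ∉ l₁ := by
    have := List.Nodup.of_append_right (l₁ := l₁) hl
    intro hmem
    exact (List.disjoint_of_nodup_append hl) hmem (List.mem_cons_self)
  have h2 : i ∉ l₂ := by
    have := (List.Nodup.of_append_right (l₁ := l₁) hl)
    rw [List.nodup_cons] at this
    exact this.1
  refine ⟨l₁.filter p, l₂.filter p, ?_, ?_, ?_, ?_⟩
  · intro hmem; exact h1 (List.mem_of_mem_filter hmem)
  · intro hmem; exact h2 (List.mem_of_mem_filter hmem)
  · rw [List.filter_append, List.filter_cons, hpi]; simp
  · rw [List.filter_append, List.filter_cons, hpi']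
    simp only [if_true, cond_true]
    congr 1
    · exact List.filter_congr fun a ha => (hag a (fun e => h1 (e ▸ ha))).symm
    · congr 1
      exact List.filter_congr fun a ha => (hag a (fun e => h2 (e ▸ ha))).symm

end DecEq

end AuxLists
section PrefLemmas
set_option linter.unusedSectionVars false

section IdxToolkit
variable {β : Type*} [BEq β] [LawfulBEq β]

theorem idx_cons_eq {a : β} (l : List β) : (a :: l).idxOf a = 0 := by
  rw [List.idxOf_cons]
  simp

theorem idx_cons_ne {a b : β} (l : List β) (h : ¬ b = a) :
    (b :: l).idxOf a = l.idxOf a + 1 := by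
  rw [List.idxOf_cons]
  have hb : (b == a) = false := by simpa using h
  simp [hb]

theorem idx_append_left {l₁ : List β} (l₂ : List β) {a : β} (h : a ∈ l₁) :
    (l₁ ++ l₂).idxOf a = l₁.idxOf a := by
  induction l₁ with
  | nil => simp at h
  | cons b t ih =>
    by_cases hb : b = a
    · subst hb
      rw [List.cons_append, idx_cons_eq, idx_cons_eq]
    · rw [List.cons_append, idx_cons_ne _ hb, idx_cons_ne _ hb, ih (by
        rcases List.mem_cons.1 h with h | h
        · exact absurd h.symm hb
        · exact h)]

theorem idx_append_right {l₁ : List β} (l₂ : List β) {a : β} (h : a ∉ l₁) :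
    (l₁ ++ l₂).idxOf a = l₁.length + l₂.idxOf a := by
  induction l₁ with
  | nil => simp
  | cons b t ih =>
    have hb : ¬ b = a := fun e => h (e ▸ List.mem_cons_self)
    rw [List.cons_append, idx_cons_ne _ hb, ih (fun hm => h (List.mem_cons_of_mem _ hm))]
    simp only [List.length_cons]
    omega

theorem idx_lt_length {l : List β} {a : β} (h : a ∈ l) : l.idxOf a < l.length := by
  induction l with
  | nil => simp at h
  | cons b t ih =>
    by_cases hb : b = a
    · subst hb
      rw [idx_cons_eq]
      simp
    · rw [idx_cons_ne _ hb]
      simp only [List.length_cons]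
      have ht : a ∈ t := by
        rcases List.mem_cons.1 h with h | h
        · exact absurd h.symm hb
        · exact h
      exact Nat.succ_lt_succ (ih ht)

theorem idx_inj {l : List β} {a b : β} (ha : a ∈ l) (hb : b ∈ l)
    (h : l.idxOf a = l.idxOf b) : a = b := by
  induction l with
  | nil => simp at ha
  | cons c t ih =>
    by_cases hca : c = a
    · by_cases hcb : c = b
      · rw [← hca, ← hcb]
      · subst hca
        rw [idx_cons_eq, idx_cons_ne _ hcb] at h
        omega
    · by_cases hcb : c = b
      · subst hcb
        rw [idx_cons_ne _ hca, idx_cons_eq] at h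
        omega
      · rw [idx_cons_ne _ hca, idx_cons_ne _ hcb] at h
        have ha' : a ∈ t := by
          rcases List.mem_cons.1 ha with h' | h'
          · exact absurd h'.symm hca
          · exact h'
        have hb' : b ∈ t := by
          rcases List.mem_cons.1 hb with h' | h'
          · exact absurd h'.symm hcb
          · exact h'
        exact ih ha' hb' (by omega)

end IdxToolkit

variable {S : Type*} [DecidableEq S]

theorem map_some_filterMap {l : List (Option S)} (h : ∀ x ∈ l, Option.isSome x) :
    (l.filterMap id).map some = l := by
  induction l with
  | nil => rfl
  | cons a t ih =>
    match a with
    | none => exact absurd (h none (List.mem_cons_self)) (by simp)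
    | some b =>
      rw [List.filterMap_cons]
      simp only [id]
      rw [List.map_cons]
      rw [show (List.filterMap (fun x => x) t) = t.filterMap id from rfl,
        ih (fun x hx => h x (List.mem_cons_of_mem _ hx))]

theorem map_some_acceptables (p : List (Option S)) :
    (acceptables p).map some = p.takeWhile (fun x => Option.isSome x) :=
  map_some_filterMap (fun _ hx => List.mem_takeWhile_imp hx)

theorem validPref_struct {p : List (Option S)} (hp : ValidPref p) :
    ∃ rest, p = (acceptables p).map some ++ none :: rest := by
  have hsplit : p.takeWhile (fun x => Option.isSome x) ++ p.dropWhile (fun x => Option.isSome x) = p :=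
    List.takeWhile_append_dropWhile
  have hnm : (none : Option S) ∈ p.dropWhile (fun x => Option.isSome x) := by
    have hp2 : (none : Option S) ∈ p := hp.2 none
    have : (none : Option S) ∉ p.takeWhile (fun x => Option.isSome x) := by
      intro h
      have := List.mem_takeWhile_imp h
      simp at this
    rw [← hsplit] at hp2
    rcases List.mem_append.1 hp2 with h | h
    · exact absurd h this
    · exact h
  cases hdw : p.dropWhile (fun x => Option.isSome x) with
  | nil => rw [hdw] at hnm; simp at hnm
  | cons a rest =>
    have ha : ¬ (Option.isSome a = true) := by
      have := List.head?_dropWhile_not (fun x => Option.isSome x) p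
      rw [hdw] at this
      simpa using this
    have ha2 : a = none := by
      cases a
      · rfl
      · simp at ha
    refine ⟨rest, ?_⟩
    conv_lhs => rw [← hsplit, hdw, ha2]
    rw [map_some_acceptables]

theorem nodup_acceptables {p : List (Option S)} (hp : ValidPref p) : (acceptables p).Nodup := by
  have h1 : ((acceptables p).map some).Nodup := by
    rw [map_some_acceptables]
    exact hp.1.sublist (List.takeWhile_sublist _)
  exact h1.of_map some

theorem indexOf_map_some (l : List S) (s : S) : (l.map some).idxOf (some s) = l.idxOf s := by
  induction l with
  | nil => rfl
  | cons a t ih =>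
    by_cases h : a = s
    · subst h
      rw [List.map_cons, idx_cons_eq, idx_cons_eq]
    · have h2 : ¬ (some a = some s) := fun e => h (by injection e)
      rw [List.map_cons, idx_cons_ne _ h2, idx_cons_ne _ h, ih]

theorem indexOf_some_of_mem_acc {p : List (Option S)} (hp : ValidPref p) {s : S}
    (hs : s ∈ acceptables p) : p.idxOf (some s) = (acceptables p).idxOf s := by
  obtain ⟨rest, hrest⟩ := validPref_struct hp
  conv_lhs => rw [hrest]
  rw [idx_append_left _ (List.mem_map_of_mem (f := some) hs), indexOf_map_some]

theorem indexOf_none_eq {p : List (Option S)} (hp : ValidPref p) :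
    p.idxOf none = (acceptables p).length := by
  obtain ⟨rest, hrest⟩ := validPref_struct hp
  conv_lhs => rw [hrest]
  rw [idx_append_right _ (by simp), idx_cons_eq, List.length_map]
  omega

theorem indexOf_some_of_not_mem_acc {p : List (Option S)} (hp : ValidPref p) {s : S}
    (hs : s ∉ acceptables p) : (acceptables p).length < p.idxOf (some s) := by
  obtain ⟨rest, hrest⟩ := validPref_struct hp
  conv_rhs => rw [hrest]
  rw [idx_append_right _ (by
    intro h
    obtain ⟨t, ht, hts⟩ := List.mem_map.1 h
    cases hts
    exact hs ht), idx_cons_ne _ (by simp), List.length_map]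
  omega

theorem accIdx_lt_length {p : List (Option S)} {s : S} (hs : s ∈ acceptables p) :
    (acceptables p).idxOf s < (acceptables p).length := idx_lt_length hs

theorem prefLt_some_none_iff {p : List (Option S)} (hp : ValidPref p) {s : S} :
    prefLt p (some s) none ↔ s ∈ acceptables p := by
  unfold prefLt
  rw [indexOf_none_eq hp]
  constructor
  · intro h
    by_contra hs
    have := indexOf_some_of_not_mem_acc hp hs
    omega
  · intro h
    rw [indexOf_some_of_mem_acc hp h]
    exact accIdx_lt_length h

theorem prefLt_none_some_iff {p : List (Option S)} (hp : ValidPref p) {s : S} :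
    prefLt p none (some s) ↔ s ∉ acceptables p := by
  unfold prefLt
  rw [indexOf_none_eq hp]
  constructor
  · intro h hs
    rw [indexOf_some_of_mem_acc hp hs] at h
    have := accIdx_lt_length hs
    omega
  · intro h
    have := indexOf_some_of_not_mem_acc hp h
    omega

theorem acc_of_prefLt {p : List (Option S)} (hp : ValidPref p) {s t : S}
    (ht : t ∈ acceptables p) (h : prefLt p (some s) (some t)) :
    s ∈ acceptables p ∧ (acceptables p).idxOf s < (acceptables p).idxOf t := by
  unfold prefLt at h
  rw [indexOf_some_of_mem_acc hp ht] at h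
  by_cases hs : s ∈ acceptables p
  · rw [indexOf_some_of_mem_acc hp hs] at h
    exact ⟨hs, h⟩
  · exfalso
    have h1 := indexOf_some_of_not_mem_acc hp hs
    have h2 := accIdx_lt_length ht
    omega

theorem prefLt_of_accIdx_lt {p : List (Option S)} (hp : ValidPref p) {s t : S}
    (hs : s ∈ acceptables p) (ht : t ∈ acceptables p)
    (h : (acceptables p).idxOf s < (acceptables p).idxOf t) :
    prefLt p (some s) (some t) := by
  unfold prefLt
  rw [indexOf_some_of_mem_acc hp hs, indexOf_some_of_mem_acc hp ht]
  exact h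

theorem eq_of_not_prefLt {p : List (Option S)} (hp : ValidPref p) {a b : Option S}
    (h1 : ¬ prefLt p a b) (h2 : ¬ prefLt p b a) : a = b := by
  unfold prefLt at h1 h2
  have : p.idxOf a = p.idxOf b := by omega
  exact idx_inj (hp.2 a) (hp.2 b) this

theorem takeWhile_append_cons {α : Type*} {pred : α → Bool} {l₁ l₂ : List α} {x : α}
    (h1 : ∀ a ∈ l₁, pred a) (h2 : pred x = false) :
    (l₁ ++ x :: l₂).takeWhile pred = l₁ := by
  induction l₁ with
  | nil => simp [List.takeWhile_cons, h2]
  | cons a t ih =>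
    rw [List.cons_append, List.takeWhile_cons, h1 a (List.mem_cons_self)]
    simp only [if_true]
    rw [ih (fun b hb => h1 b (List.mem_cons_of_mem _ hb))]

theorem filterMap_id_map_some (l : List S) : (l.map some).filterMap id = l := by
  induction l with
  | nil => rfl
  | cons a t ih => simp [List.filterMap_cons, ih]

theorem acceptables_truncate (p : List (Option S)) (k : ℕ) :
    acceptables (truncate p k) = (acceptables p).take k := by
  unfold truncate acceptables
  rw [takeWhile_append_cons (fun a ha => by
      obtain ⟨t, _, hts⟩ := List.mem_map.1 ha
      cases hts
      rfl) rfl]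
  exact filterMap_id_map_some _

theorem validPref_truncate {p : List (Option S)} (hp : ValidPref p) (k : ℕ) :
    ValidPref (truncate p k) := by
  have hnacc : ((acceptables p).take k).Nodup :=
    (nodup_acceptables hp).sublist (List.take_sublist _ _)
  constructor
  · unfold truncate
    rw [List.nodup_append]
    refine ⟨hnacc.map (Option.some_injective S), ?_, ?_⟩
    · rw [List.nodup_cons]
      constructor
      · intro h
        have := (List.mem_filter.1 h).2
        simp only [decide_eq_true_eq] at this
        exact this.1 rfl
      · exact hp.1.filter _
    · intro a ha b hb hab
      subst hab
      rcases List.mem_cons.1 hb with h | h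
      · subst h
        obtain ⟨t, _, hts⟩ := List.mem_map.1 ha
        exact nomatch hts
      · have := (List.mem_filter.1 h).2
        simp only [decide_eq_true_eq] at this
        exact this.2 ha
  · intro x
    unfold truncate
    by_cases hx : x ∈ ((acceptables p).take k).map some
    · exact List.mem_append.2 (Or.inl hx)
    · refine List.mem_append.2 (Or.inr ?_)
      by_cases hxn : x = none
      · subst hxn; exact List.mem_cons_self
      · refine List.mem_cons_of_mem _ (List.mem_filter.2 ⟨hp.2 x, ?_⟩)
        simp only [decide_eq_true_eq]
        exact ⟨hxn, hx⟩

end PrefLemmas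
section Engine
set_option linter.unusedSectionVars false
set_option maxHeartbeats 1000000
variable {I S : Type*} [Fintype I] [DecidableEq I] [Fintype S] [DecidableEq S]
variable (prio : S → List I) (q : S → ℕ)

/-- The applicant pool of school `s`. -/
def pool (R : I → List (Option S)) (σ : I → ℕ) (s : S) : List I :=
  (prio s).filter (fun i => decide (daTarget R σ i = some s))

theorem daHeld_eq_take (R : I → List (Option S)) (σ : I → ℕ) (s : S) :
    daHeld R prio q σ s = (pool prio R σ s).take (q s) := rfl

theorem mem_pool_iff {R : I → List (Option S)} {σ : I → ℕ} {s : S} {i : I} :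
    i ∈ pool prio R σ s ↔ i ∈ prio s ∧ daTarget R σ i = some s := by
  unfold pool
  rw [List.mem_filter, decide_eq_true_eq]

theorem daHeld_subset_pool {R : I → List (Option S)} {σ : I → ℕ} {s : S} :
    daHeld R prio q σ s ⊆ pool prio R σ s := by
  rw [daHeld_eq_take]
  exact List.take_subset _ _

theorem target_of_mem_daHeld {R : I → List (Option S)} {σ : I → ℕ} {s : S} {i : I}
    (h : i ∈ daHeld R prio q σ s) : daTarget R σ i = some s :=
  ((mem_pool_iff prio).1 (daHeld_subset_pool prio q h)).2

theorem pool_pairwise (hprio : ∀ s, ValidPrio (prio s)) (R : I → List (Option S))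
    (σ : I → ℕ) (s : S) : (pool prio R σ s).Pairwise (prioLt (prio s)) := by
  have h1 : (prio s).Pairwise (prioLt (prio s)) := nodup_pairwise_indexOf (hprio s).1
  exact List.Pairwise.sublist List.filter_sublist h1

theorem pool_nodup (hprio : ∀ s, ValidPrio (prio s)) (R : I → List (Option S))
    (σ : I → ℕ) (s : S) : (pool prio R σ s).Nodup :=
  (hprio s).1.filter _

theorem daHeld_nodup (hprio : ∀ s, ValidPrio (prio s)) (R : I → List (Option S))
    (σ : I → ℕ) (s : S) : (daHeld R prio q σ s).Nodup :=
  (pool_nodup prio hprio R σ s).sublist (List.take_sublist _ _)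

theorem prioLt_trans {s : S} {a b c : I} (h1 : prioLt (prio s) a b) (h2 : prioLt (prio s) b c) :
    prioLt (prio s) a c := Nat.lt_trans h1 h2

theorem prioLt_asymm {s : S} {a b : I} (h1 : prioLt (prio s) a b) : ¬ prioLt (prio s) b a :=
  fun h2 => absurd (Nat.lt_trans h1 h2) (lt_irrefl _)

/-- Student `i` is currently rejected. -/
def Rej (R : I → List (Option S)) (σ : I → ℕ) (i : I) : Prop :=
  ∃ s, daTarget R σ i = some s ∧ i ∉ daHeld R prio q σ s

/-- One student moves one step down her list. -/
def StepRel (R : I → List (Option S)) (σ σ' : I → ℕ) : Prop :=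
  ∃ i, Rej prio q R σ i ∧ σ' = Function.update σ i (σ i + 1)

def Terminal (R : I → List (Option S)) (σ : I → ℕ) : Prop :=
  ∀ i, ¬ Rej prio q R σ i

def matchOf (R : I → List (Option S)) (σ : I → ℕ) : I → Option S := fun i =>
  match daTarget R σ i with
  | none => none
  | some s => if i ∈ daHeld R prio q σ s then some s else none

def beats (R : I → List (Option S)) (σ : I → ℕ) (s : S) (x : I) : Prop :=
  (daHeld R prio q σ s).length < q s ∨ ∃ j ∈ daHeld R prio q σ s, prioLt (prio s) x j

theorem daTarget_update_ne {R : I → List (Option S)} {σ : I → ℕ} {i : I} {v : ℕ} {j : I}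
    (h : j ≠ i) : daTarget R (Function.update σ i v) j = daTarget R σ j := by
  unfold daTarget
  rw [Function.update_of_ne h]

theorem pool_cases (hprio : ∀ s, ValidPrio (prio s)) {R R' : I → List (Option S)}
    {σ σ' : I → ℕ} {i : I}
    (htgt : ∀ j, j ≠ i → daTarget R' σ' j = daTarget R σ j) (s : S) :
    pool prio R' σ' s = pool prio R σ s ∨
    (daTarget R σ i ≠ some s ∧ daTarget R' σ' i = some s ∧
      ∃ X Y, i ∉ X ∧ i ∉ Y ∧ pool prio R σ s = X ++ Y ∧ pool prio R' σ' s = X ++ i :: Y) ∨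
    (daTarget R σ i = some s ∧ daTarget R' σ' i ≠ some s ∧
      ∃ X Y, i ∉ X ∧ i ∉ Y ∧ pool prio R σ s = X ++ i :: Y ∧ pool prio R' σ' s = X ++ Y) := by
  by_cases h0 : daTarget R σ i = some s
  · by_cases h1 : daTarget R' σ' i = some s
    · left
      unfold pool
      refine List.filter_congr fun a ha => ?_
      by_cases hai : a = i
      · subst hai
        simp [h0, h1]
      · simp only [htgt a hai]
    · right; right
      refine ⟨h0, h1, ?_⟩
      obtain ⟨X, Y, hX, hY, hP, hP'⟩ := filter_insert_decomp (hprio s).1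
        (p := fun a => decide (daTarget R' σ' a = some s))
        (p' := fun a => decide (daTarget R σ a = some s))
        (fun a ha => by simp only [htgt a ha]) (by simp [h1]) (by simp [h0]) ((hprio s).2 i)
      exact ⟨X, Y, hX, hY, hP', hP⟩
  · by_cases h1 : daTarget R' σ' i = some s
    · right; left
      refine ⟨h0, h1, ?_⟩
      obtain ⟨X, Y, hX, hY, hP, hP'⟩ := filter_insert_decomp (hprio s).1
        (p := fun a => decide (daTarget R σ a = some s))
        (p' := fun a => decide (daTarget R' σ' a = some s))
        (fun a ha => by simp only [htgt a ha]) (by simp [h0]) (by simp [h1]) ((hprio s).2 i)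
      exact ⟨X, Y, hX, hY, hP, hP'⟩
    · left
      unfold pool
      refine List.filter_congr fun a ha => ?_
      by_cases hai : a = i
      · subst hai
        simp [h0, h1]
      · simp only [htgt a hai]

/-- Master comparison lemma between two states related by one student's move. -/
theorem compare_master (hprio : ∀ s, ValidPrio (prio s)) {R R' : I → List (Option S)}
    {σ σ' : I → ℕ} {i : I}
    (htgt : ∀ j, j ≠ i → daTarget R' σ' j = daTarget R σ j)
    (hrej : ∀ s, daTarget R σ i = some s → i ∉ daHeld R prio q σ s) :
    (∀ s x, beats prio q R' σ' s x → beats prio q R σ s x) ∧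
    (∀ s, (daHeld R prio q σ s).length ≤ (daHeld R' prio q σ' s).length) ∧
    (∀ j, j ≠ i → ∀ s, daTarget R σ j = some s → j ∉ daHeld R prio q σ s →
      j ∉ daHeld R' prio q σ' s) ∧
    (∀ s j, j ∈ daHeld R' prio q σ' s → j = i ∨ j ∈ daHeld R prio q σ s) ∧
    (∀ s, daTarget R σ i ≠ some s → i ∈ daHeld R' prio q σ' s → beats prio q R σ s i) := by
  have key : ∀ s,
      ((daHeld R prio q σ s).length ≤ (daHeld R' prio q σ' s).length) ∧
      (∀ j, j ≠ i → j ∈ daHeld R' prio q σ' s → j ∈ daHeld R prio q σ s) ∧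
      (daTarget R σ i ≠ some s → i ∈ daHeld R' prio q σ' s → beats prio q R σ s i) ∧
      (∀ j, j ≠ i → daTarget R σ j = some s → j ∉ daHeld R prio q σ s →
        j ∉ daHeld R' prio q σ' s) := by
    intro s
    rcases pool_cases prio hprio htgt s with heq | ⟨h0, h1, X, Y, hX, hY, hP, hP'⟩ |
        ⟨h0, h1, X, Y, hX, hY, hP, hP'⟩
    · have hsame : daHeld R' prio q σ' s = daHeld R prio q σ s := by
        rw [daHeld_eq_take, daHeld_eq_take, heq]
      refine ⟨by rw [hsame], fun j _ hj => hsame ▸ hj, ?_, fun j _ _ hj => hsame ▸ hj⟩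
      intro hne hi
      have hi2 : i ∈ pool prio R σ s := heq ▸ daHeld_subset_pool prio q hi
      exact absurd ((mem_pool_iff prio).1 hi2).2 hne
    · -- insertion case
      have hiXY : i ∉ X ++ Y := by
        rw [List.mem_append]
        rintro (h | h)
        · exact hX h
        · exact hY h
      have hold : daHeld R prio q σ s = (X ++ Y).take (q s) := by
        rw [daHeld_eq_take, hP]
      have hnew : daHeld R' prio q σ' s = (X ++ i :: Y).take (q s) := by
        rw [daHeld_eq_take, hP']
      refine ⟨?_, ?_, ?_, ?_⟩
      · rw [hold, hnew]
        exact length_take_append_cons_le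
      · intro j hji hj
        rw [hnew] at hj
        rw [hold]
        exact mem_take_append_cons hj hji
      · intro _ hi
        have hpw : (X ++ i :: Y).Pairwise (prioLt (prio s)) := by
          rw [← hP']
          exact pool_pairwise prio hprio R' σ' s
        have h5 := enter_take_append_cons (n := q s) hpw hX (by rw [hnew] at hi; exact hi)
        unfold beats
        rw [hold]
        exact h5
      · intro j hji htj hnj
        have hjXY : j ∈ X ++ Y := by
          rw [← hP]
          exact (mem_pool_iff prio).2 ⟨(hprio s).2 j, htj⟩
        rw [hold] at hnj
        rw [hnew]
        exact not_mem_take_append_cons hiXY hjXY hnj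
    · -- removal case: i not held before, so held sets are equal
      have hib : i ∉ (X ++ i :: Y).take (q s) := by
        have h2 := hrej s h0
        rw [daHeld_eq_take, hP] at h2
        exact h2
      have heq2 : daHeld R' prio q σ' s = daHeld R prio q σ s := by
        rw [daHeld_eq_take, daHeld_eq_take, hP, hP']
        exact (take_append_cons_of_not_mem_take hib).symm
      refine ⟨by rw [heq2], fun j _ hj => heq2 ▸ hj, ?_, fun j _ _ hj => heq2 ▸ hj⟩
      intro hne _
      exact absurd h0 hne
  refine ⟨?_, fun s => (key s).1, fun j hji s => (key s).2.2.2 j hji,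
    fun s j hj => ?_, fun s => (key s).2.2.1⟩
  · intro s x hb
    rcases hb with hb | ⟨j, hj, hxj⟩
    · exact Or.inl (lt_of_le_of_lt (key s).1 hb)
    · by_cases hji : j = i
      · subst hji
        have hne : daTarget R σ j ≠ some s := by
          intro hc
          have hnh := hrej s hc
          rcases pool_cases prio hprio htgt s with heq | ⟨h0, _, _⟩ | ⟨h0, h1, X, Y, hX, hY, hP, hP'⟩
          · have : j ∈ daHeld R prio q σ s := by
              rw [daHeld_eq_take, heq, ← daHeld_eq_take] at hj
              exact hj
            exact hnh this
          · exact h0 hc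
          · have hib : j ∉ (X ++ j :: Y).take (q s) := by
              rw [daHeld_eq_take, hP] at hnh
              exact hnh
            rw [daHeld_eq_take, hP'] at hj
            have hjm : j ∈ X ++ Y := List.take_subset _ _ hj
            rcases List.mem_append.1 hjm with h | h
            · exact hX h
            · exact hY h
        have hbi := (key s).2.2.1 hne hj
        rcases hbi with hbi | ⟨j', hj', hij'⟩
        · exact Or.inl hbi
        · exact Or.inr ⟨j', hj', prioLt_trans prio hxj hij'⟩
      · exact Or.inr ⟨j, (key s).2.1 j hji hj, hxj⟩
  · by_cases hji : j = i
    · exact Or.inl hji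
    · exact Or.inr ((key s).2.1 j hji hj)

theorem step_htgt {R : I → List (Option S)} {σ : I → ℕ} {i : I} :
    ∀ j, j ≠ i → daTarget R (Function.update σ i (σ i + 1)) j = daTarget R σ j :=
  fun _ hj => daTarget_update_ne hj

theorem step_hrej {R : I → List (Option S)} {σ : I → ℕ} {i : I}
    (h : Rej prio q R σ i) :
    ∀ s, daTarget R σ i = some s → i ∉ daHeld R prio q σ s := by
  intro s hs
  obtain ⟨s₀, h₀, hn₀⟩ := h
  rw [h₀] at hs
  injection hs with hs
  exact hs ▸ hn₀

theorem step_compare (hprio : ∀ s, ValidPrio (prio s)) {R : I → List (Option S)}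
    {σ σ' : I → ℕ} (h : StepRel prio q R σ σ') :
    (∀ s x, beats prio q R σ' s x → beats prio q R σ s x) ∧
    (∀ s, (daHeld R prio q σ s).length ≤ (daHeld R prio q σ' s).length) := by
  obtain ⟨i, hRi, rfl⟩ := h
  have hcmp := compare_master prio q hprio (step_htgt (R := R) (σ := σ) (i := i))
    (step_hrej prio q hRi)
  exact ⟨hcmp.1, hcmp.2.1⟩

theorem step_le {R : I → List (Option S)} {σ σ' : I → ℕ} (h : StepRel prio q R σ σ') :
    ∀ j, σ j ≤ σ' j := by
  obtain ⟨i, _, rfl⟩ := h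
  intro j
  by_cases hj : j = i
  · subst hj
    rw [Function.update_self]
    omega
  · rw [Function.update_of_ne hj]

theorem rej_preserved (hprio : ∀ s, ValidPrio (prio s)) {R : I → List (Option S)}
    {σ : I → ℕ} {i j : I} (hRi : Rej prio q R σ i) (hij : j ≠ i)
    (hRj : Rej prio q R σ j) : Rej prio q R (Function.update σ i (σ i + 1)) j := by
  have hcmp := compare_master prio q hprio (step_htgt (R := R) (σ := σ) (i := i))
    (step_hrej prio q hRi)
  obtain ⟨s, hs, hns⟩ := hRj
  exact ⟨s, (step_htgt j hij).trans hs, hcmp.2.2.1 j hij s hs hns⟩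

theorem reaches_beats_mono (hprio : ∀ s, ValidPrio (prio s)) {R : I → List (Option S)}
    {σ σ' : I → ℕ} (h : Relation.ReflTransGen (StepRel prio q R) σ σ') :
    ∀ s x, beats prio q R σ' s x → beats prio q R σ s x := by
  induction h with
  | refl => exact fun _ _ hb => hb
  | tail _ hstep ih => exact fun s x hb => ih s x ((step_compare prio q hprio hstep).1 s x hb)

theorem reaches_len_mono (hprio : ∀ s, ValidPrio (prio s)) {R : I → List (Option S)}
    {σ σ' : I → ℕ} (h : Relation.ReflTransGen (StepRel prio q R) σ σ') :
    ∀ s, (daHeld R prio q σ s).length ≤ (daHeld R prio q σ' s).length := by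
  induction h with
  | refl => exact fun _ => le_rfl
  | tail _ hstep ih => exact fun s => le_trans (ih s) ((step_compare prio q hprio hstep).2 s)

theorem reaches_le {R : I → List (Option S)} {σ σ' : I → ℕ}
    (h : Relation.ReflTransGen (StepRel prio q R) σ σ') : ∀ j, σ j ≤ σ' j := by
  induction h with
  | refl => exact fun _ => le_rfl
  | tail _ hstep ih => exact fun j => le_trans (ih j) (step_le prio q hstep j)

theorem reaches_daStep (hprio : ∀ s, ValidPrio (prio s)) (R : I → List (Option S))
    (σ : I → ℕ) : Relation.ReflTransGen (StepRel prio q R) σ (daStep R prio q σ) := by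
  classical
  have key : ∀ T : Finset I, (∀ j ∈ T, Rej prio q R σ j) →
      Relation.ReflTransGen (StepRel prio q R) σ (fun i => if i ∈ T then σ i + 1 else σ i) ∧
      (∀ j, Rej prio q R σ j → j ∉ T →
        Rej prio q R (fun i => if i ∈ T then σ i + 1 else σ i) j) := by
    intro T
    induction T using Finset.induction with
    | empty =>
      intro _
      constructor
      · have : (fun i => if i ∈ (∅ : Finset I) then σ i + 1 else σ i) = σ := by
          funext i
          simp
        rw [this]
      · intro j hj _
        have : (fun i => if i ∈ (∅ : Finset I) then σ i + 1 else σ i) = σ := by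
          funext i
          simp
        rw [this]
        exact hj
    | @insert a T' haT' ih =>
      intro hT
      have ih' := ih (fun j hj => hT j (Finset.mem_insert_of_mem hj))
      have hRa : Rej prio q R (fun i => if i ∈ T' then σ i + 1 else σ i) a :=
        ih'.2 a (hT a (Finset.mem_insert_self _ _)) haT'
      set σT' := fun i => if i ∈ T' then σ i + 1 else σ i with hσT'
      have hfun : Function.update σT' a (σT' a + 1) =
          (fun i => if i ∈ insert a T' then σ i + 1 else σ i) := by
        funext j
        by_cases hj : j = a
        · subst hj
          rw [Function.update_self, hσT']
          simp [haT']
        · rw [Function.update_of_ne hj, hσT']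
          simp only [Finset.mem_insert]
          by_cases hjT : j ∈ T' <;> simp [hjT, hj]
      constructor
      · refine ih'.1.tail ?_
        rw [← hfun]
        exact ⟨a, hRa, rfl⟩
      · intro j hj hjT
        have hja : j ≠ a := fun e => hjT (e ▸ Finset.mem_insert_self _ _)
        have hjT' : j ∉ T' := fun e => hjT (Finset.mem_insert_of_mem e)
        have h2 := ih'.2 j hj hjT'
        rw [← hfun]
        exact rej_preserved prio q hprio hRa hja h2
  have hda : daStep R prio q σ =
      (fun i => if i ∈ Finset.univ.filter (fun j => Rej prio q R σ j) then σ i + 1 else σ i) := by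
    funext i
    unfold daStep
    cases h : daTarget R σ i with
    | none =>
      have : ¬ Rej prio q R σ i := by
        rintro ⟨s, hs, -⟩
        rw [h] at hs
        exact nomatch hs
      simp [this]
    | some s =>
      by_cases hh : i ∈ daHeld R prio q σ s
      · have : ¬ Rej prio q R σ i := by
          rintro ⟨s', hs', hn'⟩
          rw [h] at hs'
          injection hs' with hs'
          exact hn' (hs' ▸ hh)
        simp [hh, this]
      · have : Rej prio q R σ i := ⟨s, h, hh⟩
        simp [hh, this]
  rw [hda]
  exact (key _ (fun j hj => (Finset.mem_filter.1 hj).2)).1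

theorem daStep_ge (R : I → List (Option S)) (σ : I → ℕ) (i : I) :
    σ i ≤ daStep R prio q σ i := by
  unfold daStep
  cases h : daTarget R σ i with
  | none => exact le_rfl
  | some s =>
    by_cases hh : i ∈ daHeld R prio q σ s <;> simp [hh]

theorem daStep_fixed_iff (R : I → List (Option S)) (σ : I → ℕ) :
    daStep R prio q σ = σ ↔ Terminal prio q R σ := by
  constructor
  · intro h i hRi
    obtain ⟨s, hs, hns⟩ := hRi
    have := congrFun h i
    unfold daStep at this
    rw [hs] at this
    simp only [hns, if_neg] at this
    simp at this
  · intro h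
    funext i
    unfold daStep
    cases hs : daTarget R σ i with
    | none => rfl
    | some s =>
      by_cases hh : i ∈ daHeld R prio q σ s
      · simp [hh]
      · exact absurd ⟨s, hs, hh⟩ (h i)

theorem acc_length_le_card {p : List (Option S)} (hp : ValidPref p) :
    (acceptables p).length ≤ Fintype.card S :=
  (nodup_acceptables hp).length_le_card

theorem step_bound {R : I → List (Option S)} {σ σ' : I → ℕ}
    (hb : ∀ i, σ i ≤ (acceptables (R i)).length) (h : StepRel prio q R σ σ') :
    ∀ i, σ' i ≤ (acceptables (R i)).length := by
  obtain ⟨i, ⟨s, hs, -⟩, rfl⟩ := h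
  intro j
  by_cases hj : j = i
  · subst hj
    rw [Function.update_self]
    have : σ j < (acceptables (R j)).length := by
      by_contra hc
      push_neg at hc
      unfold daTarget at hs
      rw [List.getElem?_eq_none hc] at hs
      exact nomatch hs
    omega
  · rw [Function.update_of_ne hj]
    exact hb j

theorem reaches_bound {R : I → List (Option S)} {σ : I → ℕ}
    (h : Relation.ReflTransGen (StepRel prio q R) (fun _ => 0) σ) :
    ∀ i, σ i ≤ (acceptables (R i)).length := by
  induction h with
  | refl => exact fun _ => Nat.zero_le _
  | tail _ hstep ih => exact step_bound prio q ih hstep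

/-- The state computed by the bounded iteration in `GS`. -/
def σfin (R : I → List (Option S)) : I → ℕ :=
  (daStep R prio q)^[Fintype.card I * Fintype.card S + 1] (fun _ => 0)

theorem reaches_iterate (hprio : ∀ s, ValidPrio (prio s)) (R : I → List (Option S)) (n : ℕ) :
    Relation.ReflTransGen (StepRel prio q R) (fun _ => 0) ((daStep R prio q)^[n] (fun _ => 0)) := by
  induction n with
  | zero => exact Relation.ReflTransGen.refl
  | succ n ih =>
    rw [Function.iterate_succ_apply']
    exact Relation.ReflTransGen.trans ih (reaches_daStep prio q hprio R _)

theorem reaches_σfin (hprio : ∀ s, ValidPrio (prio s)) (R : I → List (Option S)) :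
    Relation.ReflTransGen (StepRel prio q R) (fun _ => 0) (σfin prio q R) :=
  reaches_iterate prio q hprio R _

theorem terminal_σfin (hprio : ∀ s, ValidPrio (prio s)) {R : I → List (Option S)}
    (hR : ∀ i, ValidPref (R i)) : Terminal prio q R (σfin prio q R) := by
  classical
  by_contra hterm
  rw [← daStep_fixed_iff] at hterm
  have hnofix : ∀ t ≤ Fintype.card I * Fintype.card S + 1,
      daStep R prio q ((daStep R prio q)^[t] (fun _ => 0)) ≠
      (daStep R prio q)^[t] (fun _ => 0) := by
    intro t ht hfix
    apply hterm
    have heqq : σfin prio q R = (daStep R prio q)^[t] (fun _ => 0) := by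
      unfold σfin
      rw [show Fintype.card I * Fintype.card S + 1 =
        (Fintype.card I * Fintype.card S + 1 - t) + t from (Nat.sub_add_cancel ht).symm]
      rw [Function.iterate_add_apply]
      exact Function.iterate_fixed hfix _
    rw [heqq]
    exact hfix
  have hsum : ∀ t ≤ Fintype.card I * Fintype.card S + 1,
      t ≤ ∑ i, ((daStep R prio q)^[t] (fun _ => 0)) i := by
    intro t
    induction t with
    | zero => intro _; exact Nat.zero_le _
    | succ t ih =>
      intro ht
      have h1 := ih (by omega)
      have hne := hnofix t (by omega)
      have hlt : ∑ i, ((daStep R prio q)^[t] (fun _ => 0)) i <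
          ∑ i, ((daStep R prio q)^[t+1] (fun _ => 0)) i := by
        rw [Function.iterate_succ_apply']
        refine Finset.sum_lt_sum (fun i _ => daStep_ge prio q R _ i) ?_
        by_contra hc
        push_neg at hc
        apply hne
        funext i
        exact le_antisymm (hc i (Finset.mem_univ i)) (daStep_ge prio q R _ i)
      omega
  have hub : ∑ i, ((daStep R prio q)^[Fintype.card I * Fintype.card S + 1] (fun _ => 0)) i ≤
      Fintype.card I * Fintype.card S := by
    have hbd := reaches_bound prio q (reaches_σfin prio q hprio R)
    calc ∑ i, ((daStep R prio q)^[Fintype.card I * Fintype.card S + 1] (fun _ => 0)) i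
        ≤ ∑ _i : I, Fintype.card S :=
          Finset.sum_le_sum (fun i _ => le_trans (hbd i) (acc_length_le_card (hR i)))
      _ = Fintype.card I * Fintype.card S := by
          rw [Finset.sum_const, Finset.card_univ, smul_eq_mul]
  have hfin := hsum (Fintype.card I * Fintype.card S + 1) le_rfl
  omega

/-- The invariant: every school a student has passed justifiably rejected her, forever. -/
def GoodInv (R : I → List (Option S)) (σ : I → ℕ) : Prop :=
  ∀ i r s, r < σ i → (acceptables (R i))[r]? = some s → ¬ beats prio q R σ s i

theorem goodInv_zero (R : I → List (Option S)) : GoodInv prio q R (fun _ => 0) := by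
  intro i r s hr
  simp at hr

theorem rejected_not_beats (hprio : ∀ s, ValidPrio (prio s)) {R : I → List (Option S)}
    {σ : I → ℕ} {i : I} {s : S} (ht : daTarget R σ i = some s)
    (hn : i ∉ daHeld R prio q σ s) : ¬ beats prio q R σ s i := by
  have hipool : i ∈ pool prio R σ s := (mem_pool_iff prio).2 ⟨(hprio s).2 i, ht⟩
  have hfd := full_and_dominates_of_not_mem_take (n := q s)
    (pool_pairwise prio hprio R σ s) hipool (by rw [daHeld_eq_take] at hn; exact hn)
  rintro (hlt | ⟨j, hj, hij⟩)
  · rw [daHeld_eq_take] at hlt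
    omega
  · exact prioLt_asymm prio (hfd.2 j (by rw [daHeld_eq_take] at hj; exact hj)) hij

theorem goodInv_step (hprio : ∀ s, ValidPrio (prio s)) {R : I → List (Option S)}
    {σ σ' : I → ℕ} (h : StepRel prio q R σ σ') (hI : GoodInv prio q R σ) :
    GoodInv prio q R σ' := by
  obtain ⟨i, hRi, rfl⟩ := h
  have hmono := (step_compare prio q hprio ⟨i, hRi, rfl⟩).1
  intro j r s hr hacc
  intro hb
  have hbσ := hmono s j hb
  by_cases hji : j = i
  · subst hji
    rw [Function.update_self] at hr
    by_cases hrs : r = σ j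
    · subst hrs
      obtain ⟨s₀, ht₀, hn₀⟩ := hRi
      have hs₀ : s = s₀ := by
        unfold daTarget at ht₀
        rw [hacc] at ht₀
        injection ht₀
      subst hs₀
      exact rejected_not_beats prio q hprio ht₀ hn₀ hbσ
    · exact hI j r s (by omega) hacc hbσ
  · rw [Function.update_of_ne hji] at hr
    exact hI j r s hr hacc hbσ

theorem goodInv_reaches (hprio : ∀ s, ValidPrio (prio s)) {R : I → List (Option S)}
    {σ : I → ℕ} (h : Relation.ReflTransGen (StepRel prio q R) (fun _ => 0) σ) :
    GoodInv prio q R σ := by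
  induction h with
  | refl => exact goodInv_zero prio q R
  | tail _ hstep ih => exact goodInv_step prio q hprio hstep ih

theorem matchOf_eq_some_iff {R : I → List (Option S)} {σ : I → ℕ} {i : I} {s : S} :
    matchOf prio q R σ i = some s ↔ i ∈ daHeld R prio q σ s := by
  constructor
  · intro h
    unfold matchOf at h
    cases ht : daTarget R σ i with
    | none => rw [ht] at h; exact nomatch h
    | some s' =>
      rw [ht] at h
      change (if i ∈ daHeld R prio q σ s' then some s' else none) = some s at h
      by_cases hh : i ∈ daHeld R prio q σ s'
      · rw [if_pos hh] at h
        injection h with h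
        exact h ▸ hh
      · rw [if_neg hh] at h
        exact nomatch h
  · intro h
    have ht := target_of_mem_daHeld prio q h
    unfold matchOf
    rw [ht]
    change (if i ∈ daHeld R prio q σ s then some s else none) = some s
    rw [if_pos h]

theorem matchOf_eq_none_iff {R : I → List (Option S)} {σ : I → ℕ}
    (hterm : Terminal prio q R σ) {i : I} :
    matchOf prio q R σ i = none ↔ (acceptables (R i)).length ≤ σ i := by
  constructor
  · intro h
    unfold matchOf at h
    cases ht : daTarget R σ i with
    | none =>
      unfold daTarget at ht
      rw [List.getElem?_eq_none_iff] at ht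
      exact ht
    | some s =>
      rw [ht] at h
      change (if i ∈ daHeld R prio q σ s then some s else none) = none at h
      by_cases hh : i ∈ daHeld R prio q σ s
      · rw [if_pos hh] at h
        exact nomatch h
      · exact absurd ⟨s, ht, hh⟩ (hterm i)
  · intro h
    unfold matchOf daTarget
    rw [List.getElem?_eq_none h]

theorem occupant_card {R : I → List (Option S)} {σ : I → ℕ} (hprio : ∀ s, ValidPrio (prio s))
    (s : S) :
    (Finset.univ.filter (fun j => matchOf prio q R σ j = some s)).card =
      (daHeld R prio q σ s).length := by
  classical
  have hset : Finset.univ.filter (fun j => matchOf prio q R σ j = some s) =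
      (daHeld R prio q σ s).toFinset := by
    ext j
    rw [Finset.mem_filter, List.mem_toFinset]
    constructor
    · intro hj
      exact (matchOf_eq_some_iff prio q).1 hj.2
    · intro hj
      exact ⟨Finset.mem_univ j, (matchOf_eq_some_iff prio q).2 hj⟩
  rw [hset, List.toFinset_card_of_nodup (daHeld_nodup prio q hprio R σ s)]

theorem isMatching_matchOf {R : I → List (Option S)} {σ : I → ℕ}
    (hprio : ∀ s, ValidPrio (prio s)) : IsMatching q (matchOf prio q R σ) := by
  intro s
  rw [occupant_card prio q hprio s, daHeld_eq_take, List.length_take]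
  omega

theorem blockcond_iff_beats {R : I → List (Option S)} {σ : I → ℕ}
    (hprio : ∀ s, ValidPrio (prio s)) {s : S} {x : I} :
    ((Finset.univ.filter (fun j => matchOf prio q R σ j = some s)).card < q s ∨
      ∃ j, matchOf prio q R σ j = some s ∧ prioLt (prio s) x j) ↔ beats prio q R σ s x := by
  unfold beats
  rw [occupant_card prio q hprio s]
  constructor
  · rintro (h | ⟨j, hj, hxj⟩)
    · exact Or.inl h
    · exact Or.inr ⟨j, (matchOf_eq_some_iff prio q).1 hj, hxj⟩
  · rintro (h | ⟨j, hj, hxj⟩)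
    · exact Or.inl h
    · exact Or.inr ⟨j, (matchOf_eq_some_iff prio q).2 hj, hxj⟩

theorem matchOf_target {R : I → List (Option S)} {σ : I → ℕ}
    (hterm : Terminal prio q R σ) {i : I} {s : S} (h : matchOf prio q R σ i = some s) :
    daTarget R σ i = some s ∧ (acceptables (R i))[σ i]? = some s := by
  have hh := (matchOf_eq_some_iff prio q).1 h
  have ht := target_of_mem_daHeld prio q hh
  exact ⟨ht, ht⟩

theorem stable_matchOf (hprio : ∀ s, ValidPrio (prio s)) {R : I → List (Option S)}
    (hR : ∀ i, ValidPref (R i)) {σ : I → ℕ} (hterm : Terminal prio q R σ)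
    (hreach : Relation.ReflTransGen (StepRel prio q R) (fun _ => 0) σ) :
    IsStable R prio q (matchOf prio q R σ) := by
  have hInv := goodInv_reaches prio q hprio hreach
  constructor
  · -- individually rational
    intro i
    cases hm : matchOf prio q R σ i with
    | none =>
      unfold prefLt
      omega
    | some s =>
      have hs : s ∈ acceptables (R i) :=
        List.mem_of_getElem? (matchOf_target prio q hterm hm).2
      intro hlt
      exact absurd hs ((prefLt_none_some_iff (hR i)).1 hlt)
  · -- no blocking student
    rintro i ⟨s, hpref, hcond⟩
    have hbeats : beats prio q R σ s i := (blockcond_iff_beats prio q hprio).1 hcond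
    -- find the rank r of s, with r < σ i
    have hrank : s ∈ acceptables (R i) ∧ (acceptables (R i)).idxOf s < σ i := by
      cases hm : matchOf prio q R σ i with
      | none =>
        rw [hm] at hpref
        have hs := (prefLt_some_none_iff (hR i)).1 hpref
        refine ⟨hs, ?_⟩
        have h1 := (matchOf_eq_none_iff prio q hterm).1 hm
        have h2 := idx_lt_length hs
        omega
      | some t =>
        rw [hm] at hpref
        have ht2 := (matchOf_target prio q hterm hm).2
        have htlt : σ i < (acceptables (R i)).length := by
          by_contra hc
          push_neg at hc
          rw [List.getElem?_eq_none hc] at ht2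
          exact nomatch ht2
        have htval : (acceptables (R i))[σ i] = t := by
          have := List.getElem?_eq_getElem (l := acceptables (R i)) htlt
          rw [this] at ht2
          injection ht2
        have htmem : t ∈ acceptables (R i) := htval ▸ List.getElem_mem htlt
        obtain ⟨hs, hlt⟩ := acc_of_prefLt (hR i) htmem hpref
        refine ⟨hs, ?_⟩
        have : (acceptables (R i)).idxOf t = σ i := by
          rw [← htval]
          exact nodup_indexOf_getElem (nodup_acceptables (hR i)) _ htlt
        omega
    obtain ⟨hs, hr⟩ := hrank
    have hacc : (acceptables (R i))[(acceptables (R i)).idxOf s]? = some s :=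
      List.getElem?_idxOf hs
    exact hInv i _ s hr hacc hbeats

/-- rank of α i in the acceptable list of student i -/
def arank (R : I → List (Option S)) (α : I → Option S) (i : I) : ℕ :=
  match α i with
  | none => (acceptables (R i)).length
  | some s => (acceptables (R i)).idxOf s

theorem optInv_step (hprio : ∀ s, ValidPrio (prio s)) {R : I → List (Option S)}
    (hR : ∀ i, ValidPref (R i)) {α : I → Option S} (hαm : IsMatching q α)
    (hαs : IsStable R prio q α) {σ σ' : I → ℕ} (h : StepRel prio q R σ σ')
    (hI : ∀ i, σ i ≤ arank R α i) : ∀ i, σ' i ≤ arank R α i := by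
  classical
  obtain ⟨i, hRi, rfl⟩ := h
  intro j
  by_cases hj : j = i
  swap
  · rw [Function.update_of_ne hj]
    exact hI j
  subst hj
  rw [Function.update_self]
  rcases Nat.lt_or_ge (σ j) (arank R α j) with hlt | hge
  · omega
  exfalso
  have heq : σ j = arank R α j := le_antisymm (hI j) hge
  obtain ⟨s₀, ht₀, hn₀⟩ := hRi
  have hσlt : σ j < (acceptables (R j)).length := by
    by_contra hc
    push_neg at hc
    unfold daTarget at ht₀
    rw [List.getElem?_eq_none hc] at ht₀
    exact nomatch ht₀
  have hacc : (acceptables (R j))[σ j] = s₀ := by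
    unfold daTarget at ht₀
    rw [List.getElem?_eq_getElem hσlt] at ht₀
    injection ht₀
  have hαj : α j = some s₀ := by
    cases hα : α j with
    | none =>
      unfold arank at heq
      rw [hα] at heq
      change σ j = (acceptables (R j)).length at heq
      omega
    | some t =>
      have htacc : t ∈ acceptables (R j) := by
        by_contra hc
        have h3 := (prefLt_none_some_iff (hR j)).2 hc
        have h2 := hαs.1 j
        rw [hα] at h2
        exact h2 h3
      unfold arank at heq
      rw [hα] at heq
      change σ j = (acceptables (R j)).idxOf t at heq
      have ht3 : (acceptables (R j))[σ j]? = some t := by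
        rw [heq]
        exact List.getElem?_idxOf htacc
      rw [List.getElem?_eq_getElem hσlt, hacc] at ht3
      injection ht3 with ht3
      exact congrArg some ht3.symm
  -- j was rejected from s₀, so s₀ is full with higher-priority students
  have hjpool : j ∈ pool prio R σ s₀ := (mem_pool_iff prio).2 ⟨(hprio s₀).2 j, ht₀⟩
  have hfd := full_and_dominates_of_not_mem_take (n := q s₀)
    (pool_pairwise prio hprio R σ s₀) hjpool (by rw [daHeld_eq_take] at hn₀; exact hn₀)
  rw [← daHeld_eq_take] at hfd
  -- some held student is not matched by α to s₀
  have hex : ∃ k ∈ daHeld R prio q σ s₀, α k ≠ some s₀ := by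
    by_contra hc
    push_neg at hc
    have hsub : insert j (daHeld R prio q σ s₀).toFinset ⊆
        Finset.univ.filter (fun x => α x = some s₀) := by
      intro x hx
      rw [Finset.mem_insert, List.mem_toFinset] at hx
      rcases hx with rfl | hx
      · exact Finset.mem_filter.2 ⟨Finset.mem_univ _, hαj⟩
      · exact Finset.mem_filter.2 ⟨Finset.mem_univ _, hc x hx⟩
    have hcard : q s₀ + 1 ≤ (Finset.univ.filter (fun x => α x = some s₀)).card := by
      have h1 : (insert j (daHeld R prio q σ s₀).toFinset).card = q s₀ + 1 := by
        rw [Finset.card_insert_of_notMem (by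
          rw [List.mem_toFinset]
          exact hn₀)]
        rw [List.toFinset_card_of_nodup (daHeld_nodup prio q hprio R σ s₀), hfd.1]
      rw [← h1]
      exact Finset.card_le_card hsub
    have := hαm s₀
    omega
  obtain ⟨k, hk, hkα⟩ := hex
  have hkt := target_of_mem_daHeld prio q hk
  have hkσlt : σ k < (acceptables (R k)).length := by
    by_contra hc
    push_neg at hc
    unfold daTarget at hkt
    rw [List.getElem?_eq_none hc] at hkt
    exact nomatch hkt
  have hkacc : (acceptables (R k))[σ k] = s₀ := by
    unfold daTarget at hkt
    rw [List.getElem?_eq_getElem hkσlt] at hkt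
    injection hkt
  have hs₀k : s₀ ∈ acceptables (R k) := hkacc ▸ List.getElem_mem hkσlt
  have hs₀idx : (acceptables (R k)).idxOf s₀ = σ k := by
    rw [← hkacc]
    exact nodup_indexOf_getElem (nodup_acceptables (hR k)) _ hkσlt
  -- (k, s₀) blocks α
  have hblk : Blocks R prio q α k s₀ := by
    constructor
    · -- k prefers s₀ to α k
      cases hαk : α k with
      | none => exact (prefLt_some_none_iff (hR k)).2 hs₀k
      | some t =>
        have htacc : t ∈ acceptables (R k) := by
          by_contra hc
          have := (prefLt_none_some_iff (hR k)).2 hc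
          have h2 := hαs.1 k
          rw [hαk] at h2
          exact h2 this
        refine prefLt_of_accIdx_lt (hR k) hs₀k htacc ?_
        have hkle : σ k ≤ arank R α k := hI k
        unfold arank at hkle
        rw [hαk] at hkle
        have hne : (acceptables (R k)).idxOf s₀ ≠ (acceptables (R k)).idxOf t := by
          intro hc
          have h4 := idx_inj hs₀k htacc hc
          exact hkα (by rw [hαk, ← h4])
        change σ k ≤ (acceptables (R k)).idxOf t at hkle
        omega
    · exact Or.inr ⟨j, hαj, hfd.2 k hk⟩
  exact hαs.2 k ⟨s₀, hblk⟩

theorem optInv_reaches (hprio : ∀ s, ValidPrio (prio s)) {R : I → List (Option S)}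
    (hR : ∀ i, ValidPref (R i)) {α : I → Option S} (hαm : IsMatching q α)
    (hαs : IsStable R prio q α) {σ : I → ℕ}
    (hreach : Relation.ReflTransGen (StepRel prio q R) (fun _ => 0) σ) :
    ∀ i, σ i ≤ arank R α i := by
  induction hreach with
  | refl => intro i; exact Nat.zero_le _
  | tail _ hstep ih => exact optInv_step prio q hprio hR hαm hαs hstep ih

theorem opt_matchOf (hprio : ∀ s, ValidPrio (prio s)) {R : I → List (Option S)}
    (hR : ∀ i, ValidPref (R i)) {σ : I → ℕ} (hterm : Terminal prio q R σ)
    (hreach : Relation.ReflTransGen (StepRel prio q R) (fun _ => 0) σ)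
    {α : I → Option S} (hαm : IsMatching q α) (hαs : IsStable R prio q α) :
    ∀ i, ¬ prefLt (R i) (α i) (matchOf prio q R σ i) := by
  intro i hpref
  have hI := optInv_reaches prio q hprio hR hαm hαs hreach i
  cases hm : matchOf prio q R σ i with
  | none =>
    rw [hm] at hpref
    have hlen := (matchOf_eq_none_iff prio q hterm).1 hm
    cases hα : α i with
    | none =>
      rw [hα] at hpref
      unfold prefLt at hpref
      omega
    | some s =>
      rw [hα] at hpref
      have hs := (prefLt_some_none_iff (hR i)).1 hpref
      unfold arank at hI
      rw [hα] at hI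
      change σ i ≤ (acceptables (R i)).idxOf s at hI
      have := idx_lt_length hs
      omega
  | some t =>
    rw [hm] at hpref
    have ht2 := (matchOf_target prio q hterm hm).2
    have htlt : σ i < (acceptables (R i)).length := by
      by_contra hc
      push_neg at hc
      rw [List.getElem?_eq_none hc] at ht2
      exact nomatch ht2
    have htval : (acceptables (R i))[σ i] = t := by
      rw [List.getElem?_eq_getElem htlt] at ht2
      injection ht2
    have htmem : t ∈ acceptables (R i) := htval ▸ List.getElem_mem htlt
    have htidx : (acceptables (R i)).idxOf t = σ i := by
      rw [← htval]
      exact nodup_indexOf_getElem (nodup_acceptables (hR i)) _ htlt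
    cases hα : α i with
    | none =>
      rw [hα] at hpref
      exact absurd htmem ((prefLt_none_some_iff (hR i)).1 hpref)
    | some u =>
      rw [hα] at hpref
      obtain ⟨hu, hlt⟩ := acc_of_prefLt (hR i) htmem hpref
      unfold arank at hI
      rw [hα] at hI
      change σ i ≤ (acceptables (R i)).idxOf u at hI
      omega

theorem GS_eq_matchOf (R : I → List (Option S)) :
    GS R prio q = matchOf prio q R (σfin prio q R) := rfl

theorem GS_eq_of_terminal (hprio : ∀ s, ValidPrio (prio s)) {R : I → List (Option S)}
    (hR : ∀ i, ValidPref (R i)) {σ : I → ℕ} (hterm : Terminal prio q R σ)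
    (hreach : Relation.ReflTransGen (StepRel prio q R) (fun _ => 0) σ) :
    GS R prio q = matchOf prio q R σ := by
  rw [GS_eq_matchOf]
  have hterm₀ := terminal_σfin prio q hprio hR (R := R)
  have hreach₀ := reaches_σfin prio q hprio R
  have h1 := opt_matchOf prio q hprio hR hterm₀ hreach₀ (isMatching_matchOf prio q hprio)
    (stable_matchOf prio q hprio hR hterm hreach)
  have h2 := opt_matchOf prio q hprio hR hterm hreach (isMatching_matchOf prio q hprio)
    (stable_matchOf prio q hprio hR hterm₀ hreach₀)
  funext i
  exact eq_of_not_prefLt (hR i) (h2 i) (h1 i)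

end Engine
section Comparison
set_option linter.unusedSectionVars false
set_option maxHeartbeats 2000000
variable {I S : Type*} [Fintype I] [DecidableEq I] [Fintype S] [DecidableEq S]
variable (prio : S → List I) (q : S → ℕ)

theorem pool_subset_held_of_terminal {R : I → List (Option S)} {σ : I → ℕ}
    (hterm : Terminal prio q R σ) (s : S) :
    ∀ j ∈ pool prio R σ s, j ∈ daHeld R prio q σ s := by
  intro j hj
  by_contra hn
  exact hterm j ⟨s, ((mem_pool_iff prio).1 hj).2, hn⟩

theorem held_congr {R1 R2 : I → List (Option S)} {σ1 σ2 : I → ℕ}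
    (h : ∀ k, daTarget R1 σ1 k = daTarget R2 σ2 k) (s : S) :
    daHeld R1 prio q σ1 s = daHeld R2 prio q σ2 s := by
  show (pool prio R1 σ1 s).take (q s) = (pool prio R2 σ2 s).take (q s)
  congr 1
  unfold pool
  exact List.filter_congr fun a _ => by simp only [h a]

theorem matchOf_congr {R1 R2 : I → List (Option S)} {σ1 σ2 : I → ℕ}
    (h : ∀ k, daTarget R1 σ1 k = daTarget R2 σ2 k) :
    matchOf prio q R1 σ1 = matchOf prio q R2 σ2 := by
  funext i
  unfold matchOf
  rw [h i]
  cases ht : daTarget R2 σ2 i with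
  | none => rfl
  | some s =>
    change (if i ∈ daHeld R1 prio q σ1 s then some s else none) =
      (if i ∈ daHeld R2 prio q σ2 s then some s else none)
    rw [held_congr prio q h s]

theorem terminal_congr {R1 R2 : I → List (Option S)} {σ1 σ2 : I → ℕ}
    (h : ∀ k, daTarget R1 σ1 k = daTarget R2 σ2 k)
    (hterm : Terminal prio q R2 σ2) : Terminal prio q R1 σ1 := by
  intro k hk
  obtain ⟨s, hs, hn⟩ := hk
  refine hterm k ⟨s, (h k).symm ▸ hs, ?_⟩
  rw [← held_congr prio q h s]
  exact hn

theorem sum_update_succ (σ : I → ℕ) (i : I) :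
    ∑ j, Function.update σ i (σ i + 1) j = (∑ j, σ j) + 1 := by
  classical
  rw [Finset.sum_update_of_mem (Finset.mem_univ i), Finset.sdiff_singleton_eq_erase]
  rw [← Finset.sum_erase_add _ _ (Finset.mem_univ i)]
  omega

theorem reaches_sum_bound {R : I → List (Option S)} (hR : ∀ i, ValidPref (R i)) {σ : I → ℕ}
    (h : Relation.ReflTransGen (StepRel prio q R) (fun _ => 0) σ) :
    ∑ i, σ i ≤ Fintype.card I * Fintype.card S := by
  have hbd := reaches_bound prio q h
  calc ∑ i, σ i ≤ ∑ _i : I, Fintype.card S :=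
        Finset.sum_le_sum (fun i _ => le_trans (hbd i) (acc_length_le_card (hR i)))
    _ = Fintype.card I * Fintype.card S := by
        rw [Finset.sum_const, Finset.card_univ, smul_eq_mul]

theorem exists_terminal_ext (hprio : ∀ s, ValidPrio (prio s)) {R : I → List (Option S)}
    (hR : ∀ i, ValidPref (R i)) {σ : I → ℕ}
    (hreach : Relation.ReflTransGen (StepRel prio q R) (fun _ => 0) σ) :
    ∃ σ', Relation.ReflTransGen (StepRel prio q R) σ σ' ∧ Terminal prio q R σ' := by
  classical
  have H : ∀ k (σ : I → ℕ), Relation.ReflTransGen (StepRel prio q R) (fun _ => 0) σ →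
      Fintype.card I * Fintype.card S - (∑ i, σ i) ≤ k →
      ∃ σ', Relation.ReflTransGen (StepRel prio q R) σ σ' ∧ Terminal prio q R σ' := by
    intro k
    induction k with
    | zero =>
      intro σ hre hle
      by_cases hterm : Terminal prio q R σ
      · exact ⟨σ, Relation.ReflTransGen.refl, hterm⟩
      · exfalso
        unfold Terminal at hterm
        push_neg at hterm
        obtain ⟨i, hi⟩ := hterm
        have hstep : StepRel prio q R σ (Function.update σ i (σ i + 1)) := ⟨i, hi, rfl⟩
        have h2 := hre.tail hstep
        have h3 := reaches_sum_bound prio q hR h2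
        rw [sum_update_succ] at h3
        omega
    | succ k ih =>
      intro σ hre hle
      by_cases hterm : Terminal prio q R σ
      · exact ⟨σ, Relation.ReflTransGen.refl, hterm⟩
      · unfold Terminal at hterm
        push_neg at hterm
        obtain ⟨i, hi⟩ := hterm
        have hstep : StepRel prio q R σ (Function.update σ i (σ i + 1)) := ⟨i, hi, rfl⟩
        have h2 := hre.tail hstep
        have h3 : Fintype.card I * Fintype.card S - (∑ j, Function.update σ i (σ i + 1) j) ≤ k := by
          rw [sum_update_succ]
          omega
        obtain ⟨σ', h4, h5⟩ := ih _ h2 h3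
        exact ⟨σ', Relation.ReflTransGen.head hstep h4, h5⟩
  exact H _ σ hreach le_rfl

theorem matched_card (hprio : ∀ s, ValidPrio (prio s)) {R : I → List (Option S)} {σ : I → ℕ} :
    (Finset.univ.filter (fun j => ¬ matchOf prio q R σ j = none)).card =
      ∑ s, (daHeld R prio q σ s).length := by
  classical
  have hset : Finset.univ.filter (fun j => ¬ matchOf prio q R σ j = none) =
      Finset.univ.biUnion
        (fun s => Finset.univ.filter (fun j => matchOf prio q R σ j = some s)) := by
    ext j
    simp only [Finset.mem_filter, Finset.mem_biUnion, Finset.mem_univ, true_and]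
    constructor
    · intro h
      cases hm : matchOf prio q R σ j with
      | none => exact absurd hm h
      | some s => exact ⟨s, rfl⟩
    · rintro ⟨s, hs⟩ h
      rw [h] at hs
      exact nomatch hs
  rw [hset, Finset.card_biUnion]
  · exact Finset.sum_congr rfl fun s _ => occupant_card prio q hprio s
  · intro a _ b _ hab
    simp only [Finset.disjoint_left, Finset.mem_filter]
    rintro x ⟨-, hx1⟩ ⟨-, hx2⟩
    rw [hx1] at hx2
    exact hab (Option.some.inj hx2)

/-- A blocking student for the DA outcome of a truncation profile is unmatched. -/
theorem blocker_unmatched (hprio : ∀ s, ValidPrio (prio s)) {P : I → List (Option S)}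
    (hP : ∀ i, ValidPref (P i)) (d : I → ℕ) {σ : I → ℕ}
    (hterm : Terminal prio q (fun i => truncate (P i) (d i)) σ)
    (hreach : Relation.ReflTransGen (StepRel prio q (fun i => truncate (P i) (d i)))
      (fun _ => 0) σ)
    {x : I} (hx : BlockingStudent P prio q (matchOf prio q (fun i => truncate (P i) (d i)) σ) x) :
    matchOf prio q (fun i => truncate (P i) (d i)) σ x = none := by
  set R : I → List (Option S) := fun i => truncate (P i) (d i) with hR
  have hRval : ∀ i, ValidPref (R i) := fun i => validPref_truncate (hP i) _
  have hAcc : ∀ i, acceptables (R i) = (acceptables (P i)).take (d i) := fun i =>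
    acceptables_truncate _ _
  cases hm : matchOf prio q R σ x with
  | none => rfl
  | some s =>
  exfalso
  obtain ⟨s', hpref, hcond⟩ := hx
  rw [hm] at hpref
  -- s is among the top (d x) acceptable schools of P x
  have ht2 := (matchOf_target prio q hterm hm).2
  have htlt : σ x < (acceptables (R x)).length := by
    by_contra hc
    push_neg at hc
    rw [List.getElem?_eq_none hc] at ht2
    exact nomatch ht2
  have htval : (acceptables (R x))[σ x] = s := by
    rw [List.getElem?_eq_getElem htlt] at ht2
    injection ht2
  have hsRmem : s ∈ acceptables (R x) := htval ▸ List.getElem_mem htlt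
  have hsRidx : (acceptables (R x)).idxOf s = σ x := by
    rw [← htval]
    exact nodup_indexOf_getElem (nodup_acceptables (hRval x)) _ htlt
  have hsPmem : s ∈ acceptables (P x) := by
    rw [hAcc x] at hsRmem
    exact List.take_subset _ _ hsRmem
  have hsPidx : (acceptables (P x)).idxOf s = σ x := by
    rw [← hsRidx, hAcc x]
    exact indexOf_take (hAcc x ▸ hsRmem)
  obtain ⟨hs'P, hs'lt⟩ := acc_of_prefLt (hP x) hsPmem hpref
  -- s' is also within the truncation
  have hσd : σ x < d x := by
    have := htlt
    rw [hAcc x, List.length_take] at this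
    omega
  have hs'R : s' ∈ acceptables (R x) := by
    rw [hAcc x]
    exact mem_take_of_indexOf_lt hs'P (by omega)
  have hs'Ridx : (acceptables (R x)).idxOf s' = (acceptables (P x)).idxOf s' := by
    rw [hAcc x]
    exact (indexOf_take (hAcc x ▸ hs'R)).symm
  have hprefR : prefLt (R x) (some s') (some s) := by
    refine prefLt_of_accIdx_lt (hRval x) hs'R hsRmem ?_
    rw [hs'Ridx, hsRidx]
    omega
  have hstab := stable_matchOf prio q hprio hRval hterm hreach
  exact hstab.2 x ⟨s', by rw [hm]; exact hprefR, hcond⟩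

/-- The single-step comparison: extending one student's truncation by one school
weakly decreases the number of blocking students. -/
theorem numBlocking_step (hprio : ∀ s, ValidPrio (prio s)) (P : I → List (Option S))
    (hP : ∀ i, ValidPref (P i)) (c : I → ℕ) (i0 : I) :
    numBlocking P prio q
        (GS (fun i => truncate (P i) (Function.update c i0 (c i0 + 1) i)) prio q) ≤
      numBlocking P prio q (GS (fun i => truncate (P i) (c i)) prio q) := by
  classical
  set c' : I → ℕ := Function.update c i0 (c i0 + 1) with hc'
  set Q : I → List (Option S) := fun i => truncate (P i) (c i) with hQdef
  set Q' : I → List (Option S) := fun i => truncate (P i) (c' i) with hQ'def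
  have hQval : ∀ i, ValidPref (Q i) := fun i => validPref_truncate (hP i) _
  have hQ'val : ∀ i, ValidPref (Q' i) := fun i => validPref_truncate (hP i) _
  have hAQ : ∀ i, acceptables (Q i) = (acceptables (P i)).take (c i) := fun i =>
    acceptables_truncate _ _
  have hAQ' : ∀ i, acceptables (Q' i) = (acceptables (P i)).take (c' i) := fun i =>
    acceptables_truncate _ _
  have hc'ne : ∀ i, i ≠ i0 → c' i = c i := fun i hi => Function.update_of_ne hi _ _
  have hc'i0 : c' i0 = c i0 + 1 := Function.update_self _ _ _
  have hAeq : ∀ i, i ≠ i0 → acceptables (Q' i) = acceptables (Q i) := by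
    intro i hi
    rw [hAQ, hAQ', hc'ne i hi]
  by_cases hlen : (acceptables (P i0)).length ≤ c i0
  · -- degenerate case: the truncations coincide
    have hAeq0 : ∀ i, acceptables (Q' i) = acceptables (Q i) := by
      intro i
      by_cases hi : i = i0
      · subst hi
        rw [hAQ, hAQ', hc'i0, List.take_of_length_le hlen,
          List.take_of_length_le (by omega)]
      · exact hAeq i hi
    have htgt_all : ∀ σ : I → ℕ, ∀ k, daTarget Q' σ k = daTarget Q σ k := by
      intro σ k
      unfold daTarget
      rw [hAeq0 k]
    have hstep_eq : daStep Q' prio q = daStep Q prio q := by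
      funext σ i
      unfold daStep
      rw [htgt_all σ i]
      cases ht : daTarget Q σ i with
      | none => rfl
      | some s =>
        change (if i ∈ daHeld Q' prio q σ s then σ i else σ i + 1) =
          (if i ∈ daHeld Q prio q σ s then σ i else σ i + 1)
        rw [held_congr prio q (htgt_all σ) s]
      
    have : GS Q' prio q = GS Q prio q := by
      rw [GS_eq_matchOf, GS_eq_matchOf]
      unfold σfin
      rw [hstep_eq]
      exact matchOf_congr prio q (htgt_all _)
    rw [this]
  · push_neg at hlen
    set sstar : S := (acceptables (P i0))[c i0]'hlen with hsstar
    have hlenA : (acceptables (Q i0)).length = c i0 := by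
      rw [hAQ, List.length_take]
      omega
    have hA'0 : acceptables (Q' i0) = acceptables (Q i0) ++ [sstar] := by
      rw [hAQ, hAQ', hc'i0, List.take_succ, List.getElem?_eq_getElem hlen]
      rfl
    have hlenA' : (acceptables (Q' i0)).length = c i0 + 1 := by
      rw [hA'0, List.length_append, hlenA]
      rfl
    -- relation between targets
    have htgt_ne : ∀ (σ : I → ℕ) (j : I), j ≠ i0 → daTarget Q' σ j = daTarget Q σ j := by
      intro σ j hj
      unfold daTarget
      rw [hAeq j hj]
    have htgt_lt : ∀ σ : I → ℕ, σ i0 < c i0 → daTarget Q' σ i0 = daTarget Q σ i0 := by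
      intro σ hb
      unfold daTarget
      rw [hA'0, List.getElem?_append, if_pos (by omega)]
    have htgtQ_eq : ∀ σ : I → ℕ, σ i0 = c i0 → daTarget Q σ i0 = none := by
      intro σ hb
      unfold daTarget
      rw [List.getElem?_eq_none (by omega)]
    have htgtQ'_eq : ∀ σ : I → ℕ, σ i0 = c i0 → daTarget Q' σ i0 = some sstar := by
      intro σ hb
      unfold daTarget
      rw [hA'0, hb, ← hlenA]
      rw [List.getElem?_append_right (le_refl _)]
      simp
    have htgtQ'_gt : ∀ σ : I → ℕ, σ i0 = c i0 + 1 → daTarget Q' σ i0 = none := by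
      intro σ hb
      unfold daTarget
      rw [List.getElem?_eq_none (by omega)]
    -- the Q-run is also a Q'-run
    have hstep_bridge : ∀ σ σ' : I → ℕ, σ i0 ≤ c i0 → StepRel prio q Q σ σ' →
        StepRel prio q Q' σ σ' := by
      intro σ σ' hb hstep
      obtain ⟨j, ⟨s, hs, hn⟩, rfl⟩ := hstep
      rcases Nat.lt_or_ge (σ i0) (c i0) with hblt | hbge
      · have hall : ∀ k, daTarget Q' σ k = daTarget Q σ k := by
          intro k
          by_cases hk : k = i0
          · subst hk
            exact htgt_lt σ hblt
          · exact htgt_ne σ k hk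
        refine ⟨j, ⟨s, (hall j).symm ▸ hs, ?_⟩, rfl⟩
        rw [held_congr prio q hall s]
        exact hn
      · have hbeq : σ i0 = c i0 := by omega
        have hji0 : j ≠ i0 := by
          intro he
          subst he
          rw [htgtQ_eq σ hbeq] at hs
          exact nomatch hs
        have hcmp := compare_master prio q hprio (R := Q) (R' := Q') (σ := σ) (σ' := σ)
          (i := i0) (fun k hk => htgt_ne σ k hk)
          (fun s hs2 => absurd hs2 (by rw [htgtQ_eq σ hbeq]; exact fun h => nomatch h))
        refine ⟨j, ⟨s, (htgt_ne σ j hji0).symm ▸ hs, ?_⟩, rfl⟩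
        exact hcmp.2.2.1 j hji0 s hs hn
    have hreachQ' : ∀ {σ : I → ℕ},
        Relation.ReflTransGen (StepRel prio q Q) (fun _ => 0) σ →
        Relation.ReflTransGen (StepRel prio q Q') (fun _ => 0) σ := by
      intro σ h
      induction h with
      | refl => exact Relation.ReflTransGen.refl
      | tail hab hbc ih =>
        refine ih.tail (hstep_bridge _ _ ?_ hbc)
        have hbd := reaches_bound prio q hab i0
        omega
    -- the terminal state of the Q-run
    set σν : I → ℕ := σfin prio q Q with hσν
    have hνterm : Terminal prio q Q σν := terminal_σfin prio q hprio hQval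
    have hνreach : Relation.ReflTransGen (StepRel prio q Q) (fun _ => 0) σν :=
      reaches_σfin prio q hprio Q
    have hνreach' : Relation.ReflTransGen (StepRel prio q Q') (fun _ => 0) σν :=
      hreachQ' hνreach
    set ν : I → Option S := matchOf prio q Q σν with hν
    have hGSQ : GS Q prio q = ν := GS_eq_matchOf prio q Q
    have hbd0 : σν i0 ≤ c i0 := by
      have := reaches_bound prio q hνreach i0
      omega
    rcases Nat.lt_or_ge (σν i0) (c i0) with hσlt | hσge
    · -- Case 1: i0 never reached the extra school; outcomes coincide
      have hall : ∀ k, daTarget Q' σν k = daTarget Q σν k := by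
        intro k
        by_cases hk : k = i0
        · subst hk
          exact htgt_lt σν hσlt
        · exact htgt_ne σν k hk
      have hterm' : Terminal prio q Q' σν := terminal_congr prio q hall hνterm
      have : GS Q' prio q = ν := by
        rw [GS_eq_of_terminal prio q hprio hQ'val hterm' hνreach']
        exact matchOf_congr prio q hall
      rw [this, hGSQ]
    · have hσeq : σν i0 = c i0 := by omega
      have ht'ν : daTarget Q' σν i0 = some sstar := htgtQ'_eq σν hσeq
      have htQν : daTarget Q σν i0 = none := htgtQ_eq σν hσeq
      have hcmpν := compare_master prio q hprio (R := Q) (R' := Q') (σ := σν) (σ' := σν)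
        (i := i0) (fun k hk => htgt_ne σν k hk)
        (fun s hs2 => absurd hs2 (by rw [htQν]; exact fun h => nomatch h))
      have hνi0 : ν i0 = none := by
        rw [hν]
        unfold matchOf
        rw [htQν]
      by_cases hheld : i0 ∈ daHeld Q' prio q σν sstar
      · -- i0 is accepted at sstar when the run is resumed
        have hb0 : beats prio q Q σν sstar i0 := by
          refine hcmpν.2.2.2.2 sstar ?_ hheld
          rw [htQν]
          exact fun h => nomatch h
        have hsPmem : sstar ∈ acceptables (P i0) := List.getElem_mem hlen
        have hi0blocks : Blocks P prio q ν i0 sstar := by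
          constructor
          · rw [hνi0]
            exact (prefLt_some_none_iff (hP i0)).2 hsPmem
          · exact (blockcond_iff_beats prio q hprio).2 hb0
        by_cases hT' : Terminal prio q Q' σν
        · -- SubH-T : the run is already over; μ = ν except i0 takes sstar
          set μ : I → Option S := matchOf prio q Q' σν with hμ
          have hGSQ' : GS Q' prio q = μ :=
            GS_eq_of_terminal prio q hprio hQ'val hT' hνreach'
          have hheld_ne : ∀ s, s ≠ sstar → daHeld Q' prio q σν s = daHeld Q prio q σν s := by
            intro s hs
            show (pool prio Q' σν s).take (q s) = (pool prio Q σν s).take (q s)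
            congr 1
            unfold pool
            refine List.filter_congr fun a _ => ?_
            by_cases ha : a = i0
            · subst ha
              simp only [ht'ν, htQν]
              simp only [decide_eq_decide]
              constructor
              · intro h
                exact absurd (Option.some.inj h) (fun h2 => hs h2.symm)
              · intro h
                exact nomatch h
            · simp only [htgt_ne σν a ha]
          have hpoolsub : ∀ j ∈ pool prio Q σν sstar, j ∈ pool prio Q' σν sstar := by
            intro j hj
            obtain ⟨hj1, hj2⟩ := (mem_pool_iff prio).1 hj
            have hji0 : j ≠ i0 := by
              intro he
              subst he
              rw [htQν] at hj2
              exact nomatch hj2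
            exact (mem_pool_iff prio).2 ⟨hj1, (htgt_ne σν j hji0).symm ▸ hj2⟩
          have hi0pool : i0 ∈ pool prio Q' σν sstar :=
            (mem_pool_iff prio).2 ⟨(hprio sstar).2 i0, ht'ν⟩
          have hi0npool : i0 ∉ pool prio Q σν sstar := by
            intro hmem
            have := ((mem_pool_iff prio).1 hmem).2
            rw [htQν] at this
            exact nomatch this
          -- every Q'-applicant at sstar is held (terminality)
          have hpool'held := pool_subset_held_of_terminal prio q hT' sstar
          have hpoolheld := pool_subset_held_of_terminal prio q hνterm sstar
          -- lengths
          have hlen' : (pool prio Q' σν sstar).length ≤ q sstar := by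
            have h1 : (pool prio Q' σν sstar).toFinset ⊆
                (daHeld Q' prio q σν sstar).toFinset := by
              intro a ha
              rw [List.mem_toFinset] at ha ⊢
              exact hpool'held a ha
            have h2 := Finset.card_le_card h1
            rw [List.toFinset_card_of_nodup (pool_nodup prio hprio Q' σν sstar),
              List.toFinset_card_of_nodup (daHeld_nodup prio q hprio Q' σν sstar)] at h2
            have h3 : (daHeld Q' prio q σν sstar).length ≤ q sstar := by
              rw [daHeld_eq_take, List.length_take]
              omega
            omega
          have hlenp : (pool prio Q σν sstar).length + 1 ≤ (pool prio Q' σν sstar).length := by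
            have h1 : insert i0 (pool prio Q σν sstar).toFinset ⊆
                (pool prio Q' σν sstar).toFinset := by
              intro a ha
              rw [Finset.mem_insert] at ha
              rw [List.mem_toFinset]
              rcases ha with rfl | ha
              · exact hi0pool
              · rw [List.mem_toFinset] at ha
                exact hpoolsub a ha
            have h2 := Finset.card_le_card h1
            rw [Finset.card_insert_of_notMem (by
                rw [List.mem_toFinset]
                exact hi0npool),
              List.toFinset_card_of_nodup (pool_nodup prio hprio Q σν sstar),
              List.toFinset_card_of_nodup (pool_nodup prio hprio Q' σν sstar)] at h2
            omega
          have hvac : (daHeld Q prio q σν sstar).length < q sstar := by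
            have h1 : (daHeld Q prio q σν sstar).length ≤ (pool prio Q σν sstar).length := by
              rw [daHeld_eq_take, List.length_take]
              omega
            omega
          -- μ agrees with ν away from i0
          have hμν : ∀ j, j ≠ i0 → μ j = ν j := by
            intro j hj
            rw [hμ, hν]
            unfold matchOf
            rw [htgt_ne σν j hj]
            cases ht : daTarget Q σν j with
            | none => rfl
            | some s =>
              change (if j ∈ daHeld Q' prio q σν s then some s else none) =
                (if j ∈ daHeld Q prio q σν s then some s else none)
              by_cases hss : s = sstar
              · subst hss
                have hjp : j ∈ pool prio Q σν sstar :=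
                  (mem_pool_iff prio).2 ⟨(hprio sstar).2 j, ht⟩
                rw [if_pos (hpoolheld j hjp), if_pos (hpool'held j (hpoolsub j hjp))]
              · rw [hheld_ne s hss]
          have hμi0 : μ i0 = some sstar := by
            rw [hμ]
            unfold matchOf
            rw [ht'ν]
            change (if i0 ∈ daHeld Q' prio q σν sstar then some sstar else none) = some sstar
            rw [if_pos hheld]
          -- blocking students of μ are blocking students of ν
          have hsub : ∀ x, BlockingStudent P prio q μ x → BlockingStudent P prio q ν x := by
            intro x hx
            have hxnone : μ x = none := by
              rw [hμ] at hx ⊢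
              exact blocker_unmatched prio q hprio hP c' hT' hνreach' hx
            have hxi0 : x ≠ i0 := by
              intro he
              rw [he, hμi0] at hxnone
              exact nomatch hxnone
            have hνx : ν x = none := by
              rw [← hμν x hxi0]
              exact hxnone
            obtain ⟨s, hpref, hcond⟩ := hx
            rw [hxnone] at hpref
            refine ⟨s, by rw [hνx]; exact hpref, ?_⟩
            by_cases hss : s = sstar
            · subst hss
              left
              rw [occupant_card prio q hprio sstar]
              exact hvac
            · have hsets : Finset.univ.filter (fun j => μ j = some s) =
                  Finset.univ.filter (fun j => ν j = some s) := by
                ext j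
                rw [Finset.mem_filter, Finset.mem_filter]
                by_cases hj : j = i0
                · subst hj
                  rw [hμi0, hνi0]
                  constructor
                  · rintro ⟨-, h⟩
                    exact absurd (Option.some.inj h).symm hss
                  · rintro ⟨-, h⟩
                    exact nomatch h
                · rw [hμν j hj]
              rcases hcond with h | ⟨j, hj, hpj⟩
              · left
                rw [← hsets]
                exact h
              · right
                have hji0 : j ≠ i0 := by
                  intro he
                  rw [he, hμi0] at hj
                  exact absurd (Option.some.inj hj).symm hss
                exact ⟨j, (hμν j hji0) ▸ hj, hpj⟩
          rw [hGSQ, hGSQ']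
          unfold numBlocking
          exact Set.ncard_le_ncard (fun x hx => hsub x hx) (Set.toFinite _)
        · -- SubH-N : the run continues; compare through the resumed run
          obtain ⟨σμ, hext, hμterm⟩ := exists_terminal_ext prio q hprio hQ'val hνreach'
          have hμreach : Relation.ReflTransGen (StepRel prio q Q') (fun _ => 0) σμ :=
            hνreach'.trans hext
          have hGSQ' : GS Q' prio q = matchOf prio q Q' σμ :=
            GS_eq_of_terminal prio q hprio hQ'val hμterm hμreach
          set μ : I → Option S := matchOf prio q Q' σμ with hμ
          -- comparative facts
          have hbt : ∀ s x, beats prio q Q' σμ s x → beats prio q Q σν s x := by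
            intro s x hb
            exact hcmpν.1 s x (reaches_beats_mono prio q hprio hext s x hb)
          have hlm : ∀ s, (daHeld Q prio q σν s).length ≤ (daHeld Q' prio q σμ s).length :=
            fun s => le_trans (hcmpν.2.1 s) (reaches_len_mono prio q hprio hext s)
          have hum : ∀ j, j ≠ i0 → ν j = none → μ j = none := by
            intro j hj hnu
            rw [hμ, matchOf_eq_none_iff prio q hμterm, hAeq j hj]
            rw [hν, matchOf_eq_none_iff prio q hνterm] at hnu
            exact le_trans hnu (reaches_le prio q hext j)
          have hcardm : (Finset.univ.filter (fun j => μ j = none)).card ≤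
              (Finset.univ.filter (fun j => ν j = none)).card := by
            have h1 := matched_card prio q hprio (R := Q') (σ := σμ)
            have h2 := matched_card prio q hprio (R := Q) (σ := σν)
            have h3 : ∑ s, (daHeld Q prio q σν s).length ≤
                ∑ s, (daHeld Q' prio q σμ s).length :=
              Finset.sum_le_sum fun s _ => hlm s
            have h4 := Finset.card_filter_add_card_filter_not
              (s := Finset.univ) (p := fun j => μ j = none)
            have h5 := Finset.card_filter_add_card_filter_not
              (s := Finset.univ) (p := fun j => ν j = none)
            rw [hμ] at h4
            rw [hν] at h5
            rw [h1] at h4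
            rw [h2] at h5
            rw [hμ, hν]
            omega
          rw [hGSQ, hGSQ']
          have hnum : ∀ m : I → Option S, numBlocking P prio q m =
              (Finset.univ.filter (fun x => BlockingStudent P prio q m x)).card := by
            intro m
            unfold numBlocking
            rw [← Set.ncard_coe_finset]
            congr 1
            ext x
            simp
          rw [hnum, hnum]
          have hBμU : ∀ x, BlockingStudent P prio q μ x → μ x = none := by
            intro x hx
            rw [hμ] at hx ⊢
            exact blocker_unmatched prio q hprio hP c' hμterm hμreach hx
          have hBνU : ∀ x, BlockingStudent P prio q ν x → ν x = none := by
            intro x hx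
            rw [hν] at hx ⊢
            exact blocker_unmatched prio q hprio hP c hνterm hνreach hx
          have htrans : ∀ x, BlockingStudent P prio q μ x → ν x = none →
              BlockingStudent P prio q ν x := by
            intro x hx hνx
            have hxnone := hBμU x hx
            obtain ⟨s, hpref, hcond⟩ := hx
            rw [hxnone] at hpref
            refine ⟨s, by rw [hνx]; exact hpref, ?_⟩
            rw [hμ] at hcond
            have hb : beats prio q Q' σμ s x := (blockcond_iff_beats prio q hprio).1 hcond
            have hb2 := hbt s x hb
            have := (blockcond_iff_beats prio q hprio (R := Q) (σ := σν) (s := s) (x := x)).2 hb2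
            rw [← hν] at this
            exact this
          by_cases hUU : ∀ x, μ x = none → ν x = none
          · refine Finset.card_le_card ?_
            intro x hx
            rw [Finset.mem_filter] at hx ⊢
            exact ⟨Finset.mem_univ x, htrans x hx.2 (hUU x (hBμU x hx.2))⟩
          · push_neg at hUU
            obtain ⟨xh, hxhU, hxhN⟩ := hUU
            set Uμ : Finset I := Finset.univ.filter (fun j => μ j = none) with hUμ
            set Uν : Finset I := Finset.univ.filter (fun j => ν j = none) with hUν
            have hi0Uν : i0 ∈ Uν := by
              rw [hUν, Finset.mem_filter]
              exact ⟨Finset.mem_univ _, hνi0⟩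
            have hsdsub : Uν \ Uμ ⊆ {i0} := by
              intro j hj
              rw [Finset.mem_sdiff, hUν, hUμ, Finset.mem_filter, Finset.mem_filter] at hj
              rw [Finset.mem_singleton]
              by_contra hji
              exact hj.2 ⟨Finset.mem_univ _, hum j hji hj.1.2⟩
            have hc1 : 1 ≤ (Uμ \ Uν).card := by
              refine Finset.card_pos.2 ⟨xh, ?_⟩
              rw [Finset.mem_sdiff, hUμ, hUν, Finset.mem_filter, Finset.mem_filter]
              exact ⟨⟨Finset.mem_univ _, hxhU⟩, fun h => hxhN h.2⟩
            have e1 := Finset.card_inter_add_card_sdiff Uμ Uν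
            have e2 := Finset.card_inter_add_card_sdiff Uν Uμ
            have hIcomm : (Uμ ∩ Uν).card = (Uν ∩ Uμ).card := by rw [Finset.inter_comm]
            have hUν1 : (Uν \ Uμ).card ≤ 1 := by
              have := Finset.card_le_card hsdsub
              simpa using this
            have hUcards : Uμ.card ≤ Uν.card := hcardm
            have hμν1 : (Uμ \ Uν).card = 1 := by omega
            have hνμ1 : 1 ≤ (Uν \ Uμ).card := by omega
            obtain ⟨j, hjmem⟩ := Finset.card_pos.1 (by omega : 0 < (Uν \ Uμ).card)
            have hji0 : j = i0 := Finset.mem_singleton.1 (hsdsub hjmem)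
            have hi0nUμ : i0 ∉ Uμ := (Finset.mem_sdiff.1 (hji0 ▸ hjmem)).2
            have hi0nBμ : ¬ BlockingStudent P prio q μ i0 := by
              intro h
              apply hi0nUμ
              rw [hUμ, Finset.mem_filter]
              exact ⟨Finset.mem_univ _, hBμU i0 h⟩
            have hi0Bν : i0 ∈ Finset.univ.filter (fun x => BlockingStudent P prio q ν x) := by
              rw [Finset.mem_filter]
              exact ⟨Finset.mem_univ _, ⟨sstar, hi0blocks⟩⟩
            have hfinal : Finset.univ.filter (fun x => BlockingStudent P prio q μ x) ⊆
                ((Finset.univ.filter (fun x => BlockingStudent P prio q ν x)).erase i0) ∪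
                  (Uμ \ Uν) := by
              intro x hx
              rw [Finset.mem_filter] at hx
              rw [Finset.mem_union]
              by_cases hxν : ν x = none
              · left
                refine Finset.mem_erase.2 ⟨?_, ?_⟩
                · intro he
                  exact hi0nBμ (he ▸ hx.2)
                · rw [Finset.mem_filter]
                  exact ⟨Finset.mem_univ _, htrans x hx.2 hxν⟩
              · right
                rw [Finset.mem_sdiff, hUμ, hUν, Finset.mem_filter, Finset.mem_filter]
                exact ⟨⟨Finset.mem_univ _, hBμU x hx.2⟩, fun h => hxν h.2⟩
            have hcards := Finset.card_le_card hfinal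
            have hcu := Finset.card_union_le
              ((Finset.univ.filter (fun x => BlockingStudent P prio q ν x)).erase i0)
              (Uμ \ Uν)
            have hce := Finset.card_erase_of_mem hi0Bν
            have hpos := Finset.card_pos.2 ⟨i0, hi0Bν⟩
            omega
      · -- Case R : i0 is rejected from sstar immediately; outcomes coincide
        have hstep2 : StepRel prio q Q' σν (Function.update σν i0 (σν i0 + 1)) :=
          ⟨i0, ⟨sstar, ht'ν, hheld⟩, rfl⟩
        set σ2 : I → ℕ := Function.update σν i0 (σν i0 + 1) with hσ2
        have hall : ∀ k, daTarget Q' σ2 k = daTarget Q σν k := by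
          intro k
          by_cases hk : k = i0
          · subst hk
            rw [htgtQ'_gt σ2 (by rw [hσ2, Function.update_self]; omega), htQν]
          · rw [hσ2, daTarget_update_ne hk, htgt_ne σν k hk]
        have hterm2 : Terminal prio q Q' σ2 := terminal_congr prio q hall hνterm
        have : GS Q' prio q = ν := by
          rw [GS_eq_of_terminal prio q hprio hQ'val hterm2 (hνreach'.tail hstep2)]
          exact matchOf_congr prio q hall
        rw [this, hGSQ]
end Comparison
/-- Lemma 4: for individual constraint vectors with `kᵢ ≥ ℓᵢ > 1`
for every student `i`, the deferred acceptance matching under the `ℓ`-truncations has at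
least as many blocking students under `(P,≻,q)` as the one under the
`k`-truncations. -/
theorem numBlocking_monotone_in_truncations
    {I S : Type*} [Fintype I] [DecidableEq I] [Fintype S] [DecidableEq S]
    (hIS : Fintype.card S < Fintype.card I)
    (kv lv : I → ℕ) (hl : ∀ i, 1 < lv i) (hlk : ∀ i, lv i ≤ kv i)
    (P : I → List (Option S)) (prio : S → List I) (q : S → ℕ)
    (hP : ∀ i, ValidPref (P i)) (hprio : ∀ s, ValidPrio (prio s)) :
    numBlocking P prio q (GS (fun i => truncate (P i) (kv i)) prio q) ≤
      numBlocking P prio q (GS (fun i => truncate (P i) (lv i)) prio q) := by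
  classical
  have key : ∀ n (cv : I → ℕ), (∀ i, cv i ≤ kv i) → ∑ i, (kv i - cv i) = n →
      numBlocking P prio q (GS (fun i => truncate (P i) (kv i)) prio q) ≤
        numBlocking P prio q (GS (fun i => truncate (P i) (cv i)) prio q) := by
    intro n
    induction n with
    | zero =>
      intro cv h2 hsum
      have hcv : cv = kv := by
        funext i
        have h3 : kv i - cv i = 0 := Finset.sum_eq_zero_iff.1 hsum i (Finset.mem_univ i)
        have h4 := h2 i
        omega
      rw [hcv]
    | succ n ih =>
      intro cv h2 hsum
      have hex : ∃ i0, cv i0 < kv i0 := by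
        by_contra hc
        push_neg at hc
        have hz : ∀ i ∈ Finset.univ, kv i - cv i = 0 := by
          intro i _
          have h5 := hc i
          have h6 := h2 i
          omega
        rw [Finset.sum_eq_zero hz] at hsum
        omega
      obtain ⟨i0, hi0⟩ := hex
      have hstep := numBlocking_step prio q hprio P hP cv i0
      have hsum' : ∑ i, (kv i - Function.update cv i0 (cv i0 + 1) i) = n := by
        rw [← Finset.sum_erase_add _ _ (Finset.mem_univ i0)] at hsum ⊢
        rw [Function.update_self]
        have hcong : ∀ i ∈ Finset.univ.erase i0,
            kv i - Function.update cv i0 (cv i0 + 1) i = kv i - cv i := by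
          intro i hi
          rw [Function.update_of_ne (Finset.ne_of_mem_erase hi)]
        rw [Finset.sum_congr rfl hcong]
        omega
      have h2' : ∀ i, Function.update cv i0 (cv i0 + 1) i ≤ kv i := by
        intro i
        by_cases hi : i = i0
        · subst hi
          rw [Function.update_self]
          omega
        · rw [Function.update_of_ne hi]
          exact h2 i
      exact le_trans (ih _ h2' hsum') hstep
  exact key _ lv hlk rfl

end SchoolChoice
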